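/- arXiv:1001.5125 — 4 statements merged into one kernel-verified Lean document; each statement's English description precedes it below -/
import Mathlib

section
/- If the alternating group Alt(n) admits a (2,3,7)-generating triple, then 2*⌊n/4⌋ + 2*⌊n/3⌋ + 6*⌊n/7⌋ ≥ 2n - 2. -/
set_option linter.unusedSectionVars false
set_option linter.unusedVariables false

open Equiv Equiv.Perm

namespace HurwitzAux

variable {α : Type*} [Fintype α] [DecidableEq α]

/-- The "same cycle" setoid of a permutation. -/
def scSetoid (σ : Perm α) : Setoid α :=
  ⟨σ.SameCycle, ⟨SameCycle.refl σ, fun h => h.symm, fun h h' => h.trans h'⟩⟩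

/-- Number of cycles of a permutation (including fixed points). -/
noncomputable def cyc (σ : Perm α) : ℕ := Nat.card (Quotient (scSetoid σ))

lemma sc_mk_eq (σ : Perm α) {x y : α} (h : σ.SameCycle x y) :
    (Quotient.mk (scSetoid σ) x) = Quotient.mk (scSetoid σ) y :=
  Quotient.sound h

lemma sameCycle_of_pow {σ : Perm α} {x y : α} {k : ℕ} (h : (σ ^ k) x = y) :
    σ.SameCycle x y := ⟨(k : ℤ), by rw [zpow_natCast]; exact h⟩

lemma pow_mul_swap_apply_eq (π : Perm α) (a b x : α)
    (ha : ¬ π.SameCycle x a) (hb : ¬ π.SameCycle x b) :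
    ∀ k : ℕ, ((π * Equiv.swap a b) ^ k) x = (π ^ k) x := by
  intro k
  induction k with
  | zero => simp
  | succ k ih =>
    rw [pow_succ', pow_succ', Perm.mul_apply, Perm.mul_apply, ih, Perm.mul_apply]
    rw [Equiv.swap_apply_of_ne_of_ne]
    · intro h; exact ha (sameCycle_of_pow h)
    · intro h; exact hb (sameCycle_of_pow h)

lemma sameCycle_mul_swap_of (π : Perm α) (a b x y : α)
    (ha : ¬ π.SameCycle x a) (hb : ¬ π.SameCycle x b) (h : π.SameCycle x y) :
    (π * Equiv.swap a b).SameCycle x y := by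
  obtain ⟨i, _, _, hi⟩ := h.exists_pow_eq π
  exact sameCycle_of_pow (k := i) (by rw [pow_mul_swap_apply_eq π a b x ha hb]; exact hi)

lemma not_sameCycle_mul_swap (π : Perm α) (a b x : α)
    (ha : ¬ π.SameCycle x a) (hb : ¬ π.SameCycle x b) :
    ¬ (π * Equiv.swap a b).SameCycle x a ∧ ¬ (π * Equiv.swap a b).SameCycle x b := by
  constructor
  · intro h
    obtain ⟨i, _, _, hi⟩ := h.exists_pow_eq _
    rw [pow_mul_swap_apply_eq π a b x ha hb] at hi
    exact ha (sameCycle_of_pow hi)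
  · intro h
    obtain ⟨i, _, _, hi⟩ := h.exists_pow_eq _
    rw [pow_mul_swap_apply_eq π a b x ha hb] at hi
    exact hb (sameCycle_of_pow hi)

lemma mul_swap_mul_swap (π : Perm α) (a b : α) :
    (π * Equiv.swap a b) * Equiv.swap a b = π := by
  rw [mul_assoc, Equiv.swap_mul_self, mul_one]

lemma sameCycle_mul_swap_iff (π : Perm α) (a b x : α)
    (ha : ¬ π.SameCycle x a) (hb : ¬ π.SameCycle x b) (y : α) :
    π.SameCycle x y ↔ (π * Equiv.swap a b).SameCycle x y := by
  obtain ⟨ha', hb'⟩ := not_sameCycle_mul_swap π a b x ha hb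
  constructor
  · exact sameCycle_mul_swap_of π a b x y ha hb
  · intro h
    have := sameCycle_mul_swap_of (π * Equiv.swap a b) a b x y ha' hb' h
    rwa [mul_swap_mul_swap] at this

lemma mem_U_iff (π : Perm α) (a b z : α) :
    (π.SameCycle z a ∨ π.SameCycle z b)
      ↔ ((π * Equiv.swap a b).SameCycle z a ∨ (π * Equiv.swap a b).SameCycle z b) := by
  constructor
  · intro h
    by_contra h'
    push_neg at h'
    have h1 := sameCycle_mul_swap_iff (π * Equiv.swap a b) a b z h'.1 h'.2 a
    have h2 := sameCycle_mul_swap_iff (π * Equiv.swap a b) a b z h'.1 h'.2 b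
    rw [mul_swap_mul_swap] at h1 h2
    rcases h with h | h
    · exact h'.1 (h1.mpr h)
    · exact h'.2 (h2.mpr h)
  · intro h
    by_contra h'
    push_neg at h'
    rcases h with h | h
    · exact h'.1 ((sameCycle_mul_swap_iff π a b z h'.1 h'.2 a).mpr h)
    · exact h'.2 ((sameCycle_mul_swap_iff π a b z h'.1 h'.2 b).mpr h)

/-- The merging lemma: if `a, b` are in different cycles of `π`, they are in the same
cycle of `π * swap a b`. -/
lemma sameCycle_mul_swap_self (π : Perm α) (a b : α) (hne : a ≠ b)
    (hab : ¬ π.SameCycle a b) : (π * Equiv.swap a b).SameCycle a b := by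
  -- trajectory claim
  have claim : ∀ j : ℕ, (∀ i : ℕ, 0 < i → i ≤ j → (π ^ i) b ≠ b) →
      ((π * Equiv.swap a b) ^ (j + 1)) a = (π ^ (j + 1)) b := by
    intro j
    induction j with
    | zero =>
      intro _
      simp [Perm.mul_apply, Equiv.swap_apply_left]
    | succ j ih =>
      intro h
      have ihj := ih (fun i hi hij => h i hi (hij.trans (Nat.le_succ j)))
      rw [pow_succ', Perm.mul_apply, ihj, Perm.mul_apply]
      have h1 : (π ^ (j + 1)) b ≠ b := h (j + 1) (Nat.succ_pos j) le_rfl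
      have h2 : (π ^ (j + 1)) b ≠ a := by
        intro h2
        exact hab (sameCycle_of_pow h2).symm
      rw [Equiv.swap_apply_of_ne_of_ne h2 h1, ← Perm.mul_apply, ← pow_succ']
  have hex : ∃ m : ℕ, 0 < m ∧ (π ^ m) b = b := by
    refine ⟨orderOf π, orderOf_pos π, ?_⟩
    rw [pow_orderOf_eq_one]; rfl
  classical
  let m := Nat.find hex
  have hm : 0 < m ∧ (π ^ m) b = b := Nat.find_spec hex
  have hmin : ∀ i : ℕ, 0 < i → i < m → (π ^ i) b ≠ b := by
    intro i hi him hib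
    exact Nat.find_min hex him ⟨hi, hib⟩
  rcases Nat.lt_or_ge 1 m with hm2 | hm1
  · -- m ≥ 2
    have key : ((π * Equiv.swap a b) ^ (m - 1)) a = (π ^ (m - 1)) b := by
      have := claim (m - 2) (fun i hi hij => hmin i hi (by omega))
      have e : m - 2 + 1 = m - 1 := by omega
      rwa [e] at this
    have h1 : (π ^ (m - 1)) b ≠ b := hmin (m - 1) (by omega) (by omega)
    have h2 : (π ^ (m - 1)) b ≠ a := fun h2 => hab (sameCycle_of_pow h2).symm
    refine sameCycle_of_pow (k := m) ?_
    have e : m = (m - 1) + 1 := by omega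
    rw [e, pow_succ', Perm.mul_apply, key, Perm.mul_apply,
      Equiv.swap_apply_of_ne_of_ne h2 h1, ← Perm.mul_apply, ← pow_succ', ← e]
    exact hm.2
  · -- m = 1 : π b = b
    have hm1' : m = 1 := by omega
    have hb : π b = b := by have := hm.2; rwa [hm1', pow_one] at this
    refine sameCycle_of_pow (k := 1) ?_
    rw [pow_one, Perm.mul_apply, Equiv.swap_apply_left]
    exact hb

lemma cyc_mul_swap_le (π : Perm α) (a b : α) : cyc (π * Equiv.swap a b) ≤ cyc π + 1 := by
  classical
  set π' := π * Equiv.swap a b with hπ'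
  let f : α → Quotient (scSetoid π') := fun x =>
    if π.SameCycle x a ∨ π.SameCycle x b then Quotient.mk _ a else Quotient.mk _ x
  have wd : ∀ x y : α, π.SameCycle x y → f x = f y := by
    intro x y hxy
    by_cases hx : π.SameCycle x a ∨ π.SameCycle x b
    · have hy : π.SameCycle y a ∨ π.SameCycle y b := by
        rcases hx with h | h
        · exact Or.inl (hxy.symm.trans h)
        · exact Or.inr (hxy.symm.trans h)
      simp only [f, if_pos hx, if_pos hy]
    · have hy : ¬(π.SameCycle y a ∨ π.SameCycle y b) := by
        intro hy; apply hx
        rcases hy with h | h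
        · exact Or.inl (hxy.trans h)
        · exact Or.inr (hxy.trans h)
      simp only [f, if_neg hx, if_neg hy]
      push_neg at hx
      exact Quotient.sound (sameCycle_mul_swap_of π a b x y hx.1 hx.2 hxy)
  have hsurj : Function.Surjective
      (Sum.elim ((Quotient.lift f wd : Quotient (scSetoid π) → Quotient (scSetoid π')))
        (fun _ : Unit => Quotient.mk (scSetoid π') b)) := by
    intro q
    induction q using Quotient.ind with
    | _ z =>
      by_cases hz : π'.SameCycle z a ∨ π'.SameCycle z b
      · rcases hz with h | h
        · refine ⟨Sum.inl (Quotient.mk (scSetoid π) a), ?_⟩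
          show f a = _
          simp only [Sum.elim_inl, Quotient.lift_mk, f,
            if_pos (Or.inl (SameCycle.refl π a))]
          exact (Quotient.sound h).symm
        · exact ⟨Sum.inr (), Quotient.sound h.symm⟩
      · push_neg at hz
        have h2 : ¬(π.SameCycle z a ∨ π.SameCycle z b) := by
          intro hh
          rcases (mem_U_iff π a b z).mp hh with h | h
          · exact hz.1 h
          · exact hz.2 h
        refine ⟨Sum.inl (Quotient.mk (scSetoid π) z), ?_⟩
        show f z = _
        simp only [Sum.elim_inl, Quotient.lift_mk, f, if_neg h2]
  calc cyc π' = Nat.card (Quotient (scSetoid π')) := rfl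
    _ ≤ Nat.card (Quotient (scSetoid π) ⊕ Unit) := Nat.card_le_card_of_surjective _ hsurj
    _ = cyc π + 1 := by simp [Nat.card_sum, cyc]

lemma cyc_mul_swap_lt (π : Perm α) (a b : α) (hne : a ≠ b) (hab : ¬π.SameCycle a b) :
    cyc (π * Equiv.swap a b) + 1 ≤ cyc π := by
  classical
  set π' := π * Equiv.swap a b with hπ'
  have hmerge : π'.SameCycle a b := sameCycle_mul_swap_self π a b hne hab
  let f : α → (Quotient (scSetoid π') ⊕ Unit) := fun x =>
    if π.SameCycle x b then Sum.inr ()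
    else if π.SameCycle x a then Sum.inl (Quotient.mk _ a) else Sum.inl (Quotient.mk _ x)
  have wd : ∀ x y : α, π.SameCycle x y → f x = f y := by
    intro x y hxy
    by_cases hxb : π.SameCycle x b
    · have hyb : π.SameCycle y b := hxy.symm.trans hxb
      simp only [f, if_pos hxb, if_pos hyb]
    · have hyb : ¬π.SameCycle y b := fun hh => hxb (hxy.trans hh)
      by_cases hxa : π.SameCycle x a
      · have hya : π.SameCycle y a := hxy.symm.trans hxa
        simp only [f, if_neg hxb, if_neg hyb, if_pos hxa, if_pos hya]
      · have hya : ¬π.SameCycle y a := fun hh => hxa (hxy.trans hh)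
        simp only [f, if_neg hxb, if_neg hyb, if_neg hxa, if_neg hya]
        exact congrArg Sum.inl
          (Quotient.sound (sameCycle_mul_swap_of π a b x y hxa hxb hxy))
  have hsurj : Function.Surjective
      ((Quotient.lift f wd : Quotient (scSetoid π) → Quotient (scSetoid π') ⊕ Unit)) := by
    intro q
    rcases q with q | u
    · induction q using Quotient.ind with
      | _ z =>
        by_cases hz : π'.SameCycle z a ∨ π'.SameCycle z b
        · have hza : π'.SameCycle z a := by
            rcases hz with h | h
            · exact h
            · exact h.trans hmerge.symm
          refine ⟨Quotient.mk (scSetoid π) a, ?_⟩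
          show f a = _
          simp only [Quotient.lift_mk, f, if_neg hab, if_pos (SameCycle.refl π a)]
          exact congrArg Sum.inl (Quotient.sound hza.symm)
        · push_neg at hz
          have h2a : ¬π.SameCycle z a := by
            intro hh
            rcases (mem_U_iff π a b z).mp (Or.inl hh) with h | h
            · exact hz.1 h
            · exact hz.2 h
          have h2b : ¬π.SameCycle z b := by
            intro hh
            rcases (mem_U_iff π a b z).mp (Or.inr hh) with h | h
            · exact hz.1 h
            · exact hz.2 h
          refine ⟨Quotient.mk (scSetoid π) z, ?_⟩
          show f z = _
          simp only [Quotient.lift_mk, f, if_neg h2a, if_neg h2b]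
    · refine ⟨Quotient.mk (scSetoid π) b, ?_⟩
      show f b = _
      simp only [Quotient.lift_mk, f, if_pos (SameCycle.refl π b)]
  calc cyc π' + 1 = Nat.card (Quotient (scSetoid π') ⊕ Unit) := by simp [Nat.card_sum, cyc]
    _ ≤ Nat.card (Quotient (scSetoid π)) := Nat.card_le_card_of_surjective _ hsurj
    _ = cyc π := rfl

lemma cyc_lt_mul_swap (π : Perm α) (a : α) (ha : π a ≠ a) :
    cyc π + 1 ≤ cyc (π * Equiv.swap a (π a)) := by
  classical
  set b := π a with hb
  set π' := π * Equiv.swap a b with hπ'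
  have hfix : π' b = b := by
    simp only [hπ', Perm.mul_apply, Equiv.swap_apply_right]
    exact hb.symm
  have hne : a ≠ b := fun h => ha h.symm
  have hab : ¬ π'.SameCycle a b := by
    intro h
    obtain ⟨i, hi⟩ := h.symm
    rw [Equiv.Perm.zpow_apply_eq_self_of_apply_eq_self hfix] at hi
    exact hne hi.symm
  have := cyc_mul_swap_lt π' a b hne hab
  rwa [hπ', mul_swap_mul_swap] at this

lemma cyc_le_card (σ : Perm α) : cyc σ ≤ Fintype.card α := by
  calc cyc σ ≤ Nat.card α := Nat.card_le_card_of_surjective (Quotient.mk (scSetoid σ))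
        (fun q => Quotient.exists_rep q)
    _ = Fintype.card α := Nat.card_eq_fintype_card

lemma cyc_one : cyc (1 : Perm α) = Fintype.card α := by
  have hbij : Function.Bijective (Quotient.mk (scSetoid (1 : Perm α))) := by
    constructor
    · intro x y h
      obtain ⟨i, hi⟩ := Quotient.exact h
      simpa using hi
    · exact fun q => Quotient.exists_rep q
  rw [cyc, ← Nat.card_eq_of_bijective _ hbij, Nat.card_eq_fintype_card]

/-- Orbit setoid of a subgroup of permutations. -/
def orel (G : Subgroup (Perm α)) : Setoid α :=
  ⟨fun x y => ∃ g ∈ G, g x = y,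
    ⟨fun x => ⟨1, G.one_mem, rfl⟩,
     fun {x y} ⟨g, hg, e⟩ => ⟨g⁻¹, G.inv_mem hg, by rw [← e]; exact Equiv.symm_apply_apply g x⟩,
     fun {x y z} ⟨g, hg, e⟩ ⟨k, hk, e'⟩ =>
       ⟨k * g, G.mul_mem hk hg, by rw [Perm.mul_apply, e, e']⟩⟩⟩

/-- Number of orbits. -/
noncomputable def oc (G : Subgroup (Perm α)) : ℕ := Nat.card (Quotient (orel G))

lemma orel_r {G : Subgroup (Perm α)} {x y : α} :
    (orel G).r x y ↔ ∃ g ∈ G, g x = y := Iff.rfl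

lemma oc_mono {G H : Subgroup (Perm α)} (hGH : G ≤ H) : oc H ≤ oc G := by
  have hsurj : Function.Surjective
      ((Quotient.map' id (fun x y (h : (orel G).r x y) =>
        (show (orel H).r x y from by
          obtain ⟨g, hg, e⟩ := h; exact ⟨g, hGH hg, e⟩))) :
        Quotient (orel G) → Quotient (orel H)) := by
    intro q
    induction q using Quotient.ind with
    | _ z => exact ⟨Quotient.mk (orel G) z, rfl⟩
  exact Nat.card_le_card_of_surjective _ hsurj

section sup

variable (G : Subgroup (Perm α)) (a b : α)

/-- Relation describing orbits after adjoining `swap a b`. -/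
def Rab (x y : α) : Prop :=
  (orel G).r x y ∨ ((orel G).r x a ∧ (orel G).r y b) ∨ ((orel G).r x b ∧ (orel G).r y a)

variable {G a b}

lemma Rab_refl (x : α) : Rab G a b x x := Or.inl ((orel G).refl x)

lemma Rab_symm {x y : α} (h : Rab G a b x y) : Rab G a b y x := by
  rcases h with h | ⟨h1, h2⟩ | ⟨h1, h2⟩
  · exact Or.inl ((orel G).symm h)
  · exact Or.inr (Or.inr ⟨h2, h1⟩)
  · exact Or.inr (Or.inl ⟨h2, h1⟩)

lemma Rab_trans {x y z : α} (h : Rab G a b x y) (h' : Rab G a b y z) : Rab G a b x z := by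
  have tr : ∀ {u v w : α}, (orel G).r u v → (orel G).r v w → (orel G).r u w :=
    fun h h' => (orel G).iseqv.trans h h'
  have sy : ∀ {u v : α}, (orel G).r u v → (orel G).r v u := fun h => (orel G).iseqv.symm h
  rcases h with h | ⟨h1, h2⟩ | ⟨h1, h2⟩ <;>
    rcases h' with h' | ⟨h1', h2'⟩ | ⟨h1', h2'⟩
  · exact Or.inl (tr h h')
  · exact Or.inr (Or.inl ⟨tr h h1', h2'⟩)
  · exact Or.inr (Or.inr ⟨tr h h1', h2'⟩)
  · exact Or.inr (Or.inl ⟨h1, tr (sy h') h2⟩)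
  · exact Or.inl (tr (tr h1 (tr (sy h1') h2)) (sy h2'))
  · exact Or.inl (tr h1 (sy h2'))
  · exact Or.inr (Or.inr ⟨h1, tr (sy h') h2⟩)
  · exact Or.inl (tr h1 (sy h2'))
  · exact Or.inl (tr h1 (tr (sy h1') (tr h2 (sy h2'))))

lemma rab_of_mem_closure_insert :
    ∀ h ∈ Subgroup.closure (insert (Equiv.swap a b) (G : Set (Perm α))), ∀ x : α,
      Rab G a b (h x) x := by
  intro h hmem
  induction hmem using Subgroup.closure_induction with
  | mem g hg =>
    intro x
    rcases Set.mem_insert_iff.mp hg with rfl | hgG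
    · by_cases hxa : x = a
      · rw [hxa, Equiv.swap_apply_left]
        exact Or.inr (Or.inr ⟨(orel G).refl b, (orel G).refl a⟩)
      · by_cases hxb : x = b
        · rw [hxb, Equiv.swap_apply_right]
          exact Or.inr (Or.inl ⟨(orel G).refl a, (orel G).refl b⟩)
        · rw [Equiv.swap_apply_of_ne_of_ne hxa hxb]
          exact Rab_refl x
    · exact Or.inl ((orel G).symm (⟨g, hgG, rfl⟩ : (orel G).r x (g x)))
  | one => intro x; exact Rab_refl x
  | mul g k hg hk ihg ihk =>
    intro x
    have h1 : Rab G a b (g (k x)) (k x) := ihg (k x)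
    have h2 : Rab G a b (k x) x := ihk x
    exact Rab_trans (by simpa [Perm.mul_apply] using h1) h2
  | inv g hg ihg =>
    intro x
    have := ihg (g⁻¹ x)
    rw [show g (g⁻¹ x) = x from Equiv.apply_symm_apply g x] at this
    exact Rab_symm (by simpa using this)

lemma oc_le_closure_insert_of_rel (hab : (orel G).r a b) :
    oc G ≤ oc (Subgroup.closure (insert (Equiv.swap a b) (G : Set (Perm α)))) := by
  set H := Subgroup.closure (insert (Equiv.swap a b) (G : Set (Perm α))) with hH
  have himp : ∀ x y : α, (orel H).r x y → (orel G).r x y := by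
    intro x y ⟨g, hg, e⟩
    have := rab_of_mem_closure_insert g hg x
    rw [e] at this
    have tr : ∀ {u v w : α}, (orel G).r u v → (orel G).r v w → (orel G).r u w :=
      fun h h' => (orel G).iseqv.trans h h'
    have sy : ∀ {u v : α}, (orel G).r u v → (orel G).r v u := fun h => (orel G).iseqv.symm h
    rcases Rab_symm this with h | ⟨h1, h2⟩ | ⟨h1, h2⟩
    · exact h
    · exact tr h1 (tr hab (sy h2))
    · exact tr h1 (tr (sy hab) (sy h2))
  have hsurj : Function.Surjective
      ((Quotient.map' id himp) : Quotient (orel H) → Quotient (orel G)) := by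
    intro q
    induction q using Quotient.ind with
    | _ z => exact ⟨Quotient.mk (orel H) z, rfl⟩
  exact Nat.card_le_card_of_surjective _ hsurj

lemma oc_le_closure_insert_add_one :
    oc G ≤ oc (Subgroup.closure (insert (Equiv.swap a b) (G : Set (Perm α)))) + 1 := by
  classical
  set H := Subgroup.closure (insert (Equiv.swap a b) (G : Set (Perm α))) with hH
  have hGH : G ≤ H := fun g hg => Subgroup.subset_closure (Set.mem_insert_of_mem _ hg)
  let f : α → (Quotient (orel H) ⊕ Unit) := fun x =>
    if (orel G).r x b then Sum.inr () else Sum.inl (Quotient.mk (orel H) x)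
  have wd : ∀ x y : α, (orel G).r x y → f x = f y := by
    intro x y hxy
    by_cases hxb : (orel G).r x b
    · have hyb : (orel G).r y b := (orel G).trans ((orel G).symm hxy) hxb
      simp only [f, if_pos hxb, if_pos hyb]
    · have hyb : ¬(orel G).r y b := fun hh => hxb ((orel G).trans hxy hh)
      simp only [f, if_neg hxb, if_neg hyb]
      obtain ⟨g, hg, e⟩ := hxy
      exact congrArg Sum.inl (Quotient.sound (⟨g, hGH hg, e⟩ : (orel H).r x y))
  have hinj : Function.Injective
      ((Quotient.lift f wd : Quotient (orel G) → Quotient (orel H) ⊕ Unit)) := by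
    intro q q'
    induction q using Quotient.ind with
    | _ x =>
      induction q' using Quotient.ind with
      | _ y =>
        intro he
        simp only [Quotient.lift_mk] at he
        by_cases hxb : (orel G).r x b
        · by_cases hyb : (orel G).r y b
          · exact Quotient.sound ((orel G).trans hxb ((orel G).symm hyb))
          · simp [f, if_pos hxb, if_neg hyb] at he
        · by_cases hyb : (orel G).r y b
          · simp [f, if_neg hxb, if_pos hyb] at he
          · simp only [f, if_neg hxb, if_neg hyb, Sum.inl.injEq] at he
            have hxy : (orel H).r x y := Quotient.exact he
            obtain ⟨g, hg, e⟩ := hxy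
            have := rab_of_mem_closure_insert g hg x
            rw [e] at this
            rcases Rab_symm this with h | ⟨h1, h2⟩ | ⟨h1, h2⟩
            · exact Quotient.sound h
            · exact absurd h2 hyb
            · exact absurd h1 hxb
  calc oc G = Nat.card (Quotient (orel G)) := rfl
    _ ≤ Nat.card (Quotient (orel H) ⊕ Unit) := Nat.card_le_card_of_injective _ hinj
    _ = oc H + 1 := by simp [Nat.card_sum, oc]

end sup

lemma cyc_le_oc_zpowers (σ : Perm α) : cyc σ ≤ oc (Subgroup.zpowers σ) := by
  have himp : ∀ x y : α, (orel (Subgroup.zpowers σ)).r x y → σ.SameCycle x y := by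
    intro x y ⟨g, hg, e⟩
    obtain ⟨k, hk⟩ := Subgroup.mem_zpowers_iff.mp hg
    exact ⟨k, by rw [hk]; exact e⟩
  have hsurj : Function.Surjective
      ((Quotient.map' id himp) : Quotient (orel (Subgroup.zpowers σ)) → Quotient (scSetoid σ)) := by
    intro q
    induction q using Quotient.ind with
    | _ z => exact ⟨Quotient.mk (orel (Subgroup.zpowers σ)) z, rfl⟩
  exact Nat.card_le_card_of_surjective _ hsurj

lemma main_aux : ∀ k : ℕ, ∀ σ τ : Perm α, Fintype.card α - cyc τ < k →
    cyc σ + cyc τ + cyc (σ * τ) ≤ Fintype.card α + 2 * oc (Subgroup.closure {σ, τ}) := by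
  intro k
  induction k with
  | zero => intro σ τ h; omega
  | succ k IH =>
    intro σ τ hk
    by_cases hτ : τ = 1
    · subst hτ
      have hcl : Subgroup.closure {σ, (1 : Perm α)} = Subgroup.zpowers σ := by
        rw [Subgroup.zpowers_eq_closure]
        apply le_antisymm
        · apply (Subgroup.closure_le _).mpr
          intro g hg
          simp only [Set.mem_insert_iff, Set.mem_singleton_iff] at hg
          rcases hg with rfl | rfl
          · exact Subgroup.subset_closure rfl
          · exact Subgroup.one_mem _
        · apply (Subgroup.closure_le _).mpr
          intro g hg
          simp only [Set.mem_singleton_iff] at hg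
          subst hg
          exact Subgroup.subset_closure (Set.mem_insert _ _)
      rw [hcl, mul_one, cyc_one]
      have := cyc_le_oc_zpowers σ
      omega
    · obtain ⟨a, ha⟩ : ∃ a, τ a ≠ a := by
        by_contra hc
        push_neg at hc
        exact hτ (Equiv.ext (by simpa using hc))
      set b := τ a with hb
      set τ' := τ * Equiv.swap a b with hτ'
      set G := Subgroup.closure {σ, τ} with hG
      set G' := Subgroup.closure {σ, τ'} with hG'
      set H := Subgroup.closure (insert (Equiv.swap a b) (G' : Set (Perm α))) with hH
      have h3 : cyc τ + 1 ≤ cyc τ' := cyc_lt_mul_swap τ a ha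
      have h3' : cyc τ' ≤ Fintype.card α := cyc_le_card τ'
      have hlt : Fintype.card α - cyc τ' < k := by omega
      have hσG' : σ ∈ G' := Subgroup.subset_closure (Set.mem_insert _ _)
      have hτ'G' : τ' ∈ G' := Subgroup.subset_closure (Set.mem_insert_of_mem _ rfl)
      have hG'H : G' ≤ H := fun g hg => Subgroup.subset_closure (Set.mem_insert_of_mem _ hg)
      have htH : Equiv.swap a b ∈ H := Subgroup.subset_closure (Set.mem_insert _ _)
      have hGH : G ≤ H := by
        apply (Subgroup.closure_le _).mpr
        intro g hg
        simp only [Set.mem_insert_iff, Set.mem_singleton_iff] at hg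
        rcases hg with rfl | rfl
        · exact hG'H hσG'
        · have : τ' * Equiv.swap a b ∈ H := Subgroup.mul_mem _ (hG'H hτ'G') htH
          rwa [hτ', mul_swap_mul_swap] at this
      have hIH := IH σ τ' hlt
      rw [← hG'] at hIH
      have hστ : σ * τ = (σ * τ') * Equiv.swap a b := by
        rw [hτ', mul_assoc, mul_assoc, Equiv.swap_mul_self, mul_one]
      have h5 : oc H ≤ oc G := oc_mono hGH
      by_cases hsc : (σ * τ').SameCycle a b
      · have hrel : (orel G').r a b := by
          obtain ⟨i, hi⟩ := hsc
          exact ⟨(σ * τ') ^ i, Subgroup.zpow_mem _ (Subgroup.mul_mem _ hσG' hτ'G') i, hi⟩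
        have h4 : oc G' ≤ oc H := oc_le_closure_insert_of_rel hrel
        have h6 : cyc (σ * τ) ≤ cyc (σ * τ') + 1 := by
          rw [hστ]; exact cyc_mul_swap_le _ a b
        omega
      · have hne : a ≠ b := fun e => ha e.symm
        have h6 : cyc (σ * τ) + 1 ≤ cyc (σ * τ') := by
          rw [hστ]; exact cyc_mul_swap_lt _ a b hne hsc
        have h4 : oc G' ≤ oc H + 1 := oc_le_closure_insert_add_one
        omega

theorem cyc_add_le (σ τ : Perm α) :
    cyc σ + cyc τ + cyc (σ * τ) ≤ Fintype.card α + 2 * oc (Subgroup.closure {σ, τ}) :=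
  main_aux (Fintype.card α - cyc τ + 1) σ τ (Nat.lt_succ_self _)

lemma cyc_eq_card (σ : Perm α) :
    cyc σ = (Fintype.card α - σ.support.card) + Multiset.card σ.cycleType := by
  classical
  have hsupp : ∀ c : ↥σ.cycleFactorsFinset, (c : Perm α).support.Nonempty := fun c =>
    Finset.card_pos.mp (lt_trans one_pos
      (one_lt_card_support_of_ne_one (mem_cycleFactorsFinset_iff.mp c.2).1.ne_one))
  let pt : ↥σ.cycleFactorsFinset → α := fun c => (hsupp c).choose
  have hpt : ∀ c : ↥σ.cycleFactorsFinset, pt c ∈ (c : Perm α).support := fun c => (hsupp c).choose_spec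
  have hptσ : ∀ c : ↥σ.cycleFactorsFinset, pt c ∈ σ.support := fun c =>
    mem_cycleFactorsFinset_support_le c.2 (hpt c)
  have fixed_sc : ∀ {x y : α}, σ x = x → σ.SameCycle x y → y = x := by
    intro x y hfix ⟨i, hi⟩
    rw [Equiv.Perm.zpow_apply_eq_self_of_apply_eq_self hfix] at hi
    exact hi.symm
  let f : (↥(σ.supportᶜ) ⊕ ↥σ.cycleFactorsFinset) →
      Quotient (scSetoid σ) := fun z =>
    match z with
    | Sum.inl x => Quotient.mk (scSetoid σ) (x : α)
    | Sum.inr c => Quotient.mk (scSetoid σ) (pt c)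
  have hbij : Function.Bijective f := by
    constructor
    · rintro (x | c) (y | d) he
      · have hsc : σ.SameCycle (x : α) (y : α) := Quotient.exact he
        have hfix : σ (x : α) = x := notMem_support.mp (Finset.mem_compl.mp x.2)
        exact congrArg Sum.inl (Subtype.ext (fixed_sc hfix hsc).symm)
      · have hsc : σ.SameCycle (x : α) (pt d) := Quotient.exact he
        have hfix : σ (x : α) = x := notMem_support.mp (Finset.mem_compl.mp x.2)
        have := fixed_sc hfix hsc
        exact absurd (this ▸ hptσ d) (Finset.mem_compl.mp x.2)
      · have hsc : σ.SameCycle (pt c) (y : α) := Quotient.exact he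
        have hfix : σ (y : α) = y := notMem_support.mp (Finset.mem_compl.mp y.2)
        have := fixed_sc hfix hsc.symm
        exact absurd (this ▸ hptσ c) (Finset.mem_compl.mp y.2)
      · have hsc : σ.SameCycle (pt c) (pt d) := Quotient.exact he
        have hc : (c : Perm α) = σ.cycleOf (pt c) := cycle_is_cycleOf (hpt c) c.2
        have hd : (d : Perm α) = σ.cycleOf (pt d) := cycle_is_cycleOf (hpt d) d.2
        have : (c : Perm α) = (d : Perm α) := by rw [hc, hd, hsc.cycleOf_eq]
        exact congrArg Sum.inr (Subtype.ext this)
    · intro q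
      induction q using Quotient.ind with
      | _ z =>
        by_cases hz : z ∈ σ.support
        · refine ⟨Sum.inr ⟨σ.cycleOf z, cycleOf_mem_cycleFactorsFinset_iff.mpr hz⟩, ?_⟩
          have hmem := hpt ⟨σ.cycleOf z, cycleOf_mem_cycleFactorsFinset_iff.mpr hz⟩
          have hsc : σ.SameCycle z (pt ⟨σ.cycleOf z, cycleOf_mem_cycleFactorsFinset_iff.mpr hz⟩) :=
            (mem_support_cycleOf_iff.mp hmem).1
          exact Quotient.sound hsc.symm
        · exact ⟨Sum.inl ⟨z, Finset.mem_compl.mpr hz⟩, rfl⟩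
  have hcard := Nat.card_eq_of_bijective f hbij
  have h1 : Multiset.card σ.cycleType = σ.cycleFactorsFinset.card := by
    rw [cycleType_def, Multiset.card_map]; rfl
  rw [cyc, ← hcard, Nat.card_sum, Nat.card_eq_fintype_card, Nat.card_eq_fintype_card,
    Fintype.card_coe, Fintype.card_coe, Finset.card_compl, h1]

lemma cycleType_replicate {σ : Perm α} {p : ℕ} (hp : p.Prime) (h : orderOf σ = p) :
    σ.cycleType = Multiset.replicate (Multiset.card σ.cycleType) p := by
  apply Multiset.eq_replicate_card.mpr
  intro r hr
  have h2 : 2 ≤ r := two_le_of_mem_cycleType hr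
  have hdvd : r ∣ p := by rw [← h, ← lcm_cycleType]; exact Multiset.dvd_lcm hr
  rcases hp.eq_one_or_self_of_dvd r hdvd with h1 | h1
  · omega
  · exact h1

lemma oc_alt_le_one (n : ℕ) (hn : 3 ≤ n) : oc (alternatingGroup (Fin n)) ≤ 1 := by
  classical
  have x0 : Fin n := ⟨0, by omega⟩
  have hsurj : Function.Surjective
      (fun _ : Unit => Quotient.mk (orel (alternatingGroup (Fin n))) x0) := by
    intro q
    induction q using Quotient.ind with
    | _ z =>
      refine ⟨(), Quotient.sound ?_⟩
      show (orel (alternatingGroup (Fin n))).r x0 z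
      by_cases hz : z = x0
      · exact hz ▸ (orel _).refl z
      · have hcompl : (({z, x0} : Finset (Fin n))ᶜ).Nonempty := by
          apply Finset.card_pos.mp
          rw [Finset.card_compl]
          have h1 : ({z, x0} : Finset (Fin n)).card ≤ 2 :=
            (Finset.card_insert_le _ _).trans (by simp)
          have h2 : Fintype.card (Fin n) = n := Fintype.card_fin n
          omega
        obtain ⟨w, hw⟩ := hcompl
        simp only [Finset.mem_compl, Finset.mem_insert, Finset.mem_singleton, not_or] at hw
        refine ⟨Equiv.swap x0 w * Equiv.swap x0 z, ?_, ?_⟩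
        · rw [Equiv.Perm.mem_alternatingGroup, Equiv.Perm.sign_mul,
            Equiv.Perm.sign_swap (by exact fun e => hw.2 e.symm),
            Equiv.Perm.sign_swap (by exact fun e => hz e.symm)]
          decide
        · rw [Perm.mul_apply, Equiv.swap_apply_left,
            Equiv.swap_apply_of_ne_of_ne (fun e => hz e) (fun e => hw.1 e.symm)]
  calc oc (alternatingGroup (Fin n)) ≤ Nat.card Unit :=
        Nat.card_le_card_of_surjective _ hsurj
    _ = 1 := Nat.card_unique

end HurwitzAux

open HurwitzAux in
/-- If Alt(n) admits a (2,3,7)-generating triple, then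
    2⌊n/4⌋ + 2⌊n/3⌋ + 6⌊n/7⌋ ≥ 2n - 2. -/
theorem stmt_0 (n : ℕ)
    (h : ∃ x y : Equiv.Perm (Fin n),
      orderOf x = 2 ∧ orderOf y = 3 ∧ orderOf (x * y) = 7 ∧
      Subgroup.closure {x, y} = alternatingGroup (Fin n)) :
    2 * (n / 4) + 2 * (n / 3) + 6 * (n / 7) ≥ 2 * n - 2 := by
  classical
  obtain ⟨x, y, hx, hy, hxy, hcl⟩ := h
  have hcard : Fintype.card (Fin n) = n := Fintype.card_fin n
  -- nontriviality
  have hx1 : x ≠ 1 := by intro e; rw [e, orderOf_one] at hx; omega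
  have hy1 : y ≠ 1 := by intro e; rw [e, orderOf_one] at hy; omega
  have hxy1 : x * y ≠ 1 := by intro e; rw [e, orderOf_one] at hxy; omega
  set m2 := Multiset.card x.cycleType with hm2
  set m3 := Multiset.card y.cycleType with hm3
  set m7 := Multiset.card (x * y).cycleType with hm7
  have hrep2 : x.cycleType = Multiset.replicate m2 2 := cycleType_replicate (by norm_num) hx
  have hrep3 : y.cycleType = Multiset.replicate m3 3 := cycleType_replicate (by norm_num) hy
  have hrep7 : (x * y).cycleType = Multiset.replicate m7 7 := cycleType_replicate (by norm_num) hxy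
  have hs2 : x.support.card = m2 * 2 := by
    rw [← Equiv.Perm.sum_cycleType, hrep2, Multiset.sum_replicate, smul_eq_mul]
  have hs3 : y.support.card = m3 * 3 := by
    rw [← Equiv.Perm.sum_cycleType, hrep3, Multiset.sum_replicate, smul_eq_mul]
  have hs7 : (x * y).support.card = m7 * 7 := by
    rw [← Equiv.Perm.sum_cycleType, hrep7, Multiset.sum_replicate, smul_eq_mul]
  have hs2le : x.support.card ≤ n := le_trans (Finset.card_le_univ _) (le_of_eq hcard)
  have hs3le : y.support.card ≤ n := le_trans (Finset.card_le_univ _) (le_of_eq hcard)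
  have hs7le : (x * y).support.card ≤ n := le_trans (Finset.card_le_univ _) (le_of_eq hcard)
  have hm7pos : 0 < m7 := Equiv.Perm.card_cycleType_pos.mpr hxy1
  have hn7 : 7 ≤ n := by omega
  -- evenness of m2 from x being even
  have hxalt : x ∈ alternatingGroup (Fin n) :=
    hcl ▸ Subgroup.subset_closure (Set.mem_insert _ _)
  have hsx : Equiv.Perm.sign x = 1 := Equiv.Perm.mem_alternatingGroup.mp hxalt
  have heven : Even m2 := by
    rcases Nat.even_or_odd m2 with he | ho
    · exact he
    · exfalso
      have hodd : Odd (x.cycleType.sum + m2) := by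
        rw [hrep2, Multiset.sum_replicate, smul_eq_mul]
        rcases ho with ⟨j, hj⟩
        exact ⟨3 * j + 1, by omega⟩
      have := Equiv.Perm.sign_of_cycleType x
      rw [hsx, hodd.neg_one_pow] at this
      exact absurd this (by decide)
  -- cycle counts
  have hcx : cyc x = (n - x.support.card) + m2 := by rw [cyc_eq_card, hcard]
  have hcy : cyc y = (n - y.support.card) + m3 := by rw [cyc_eq_card, hcard]
  have hcxy : cyc (x * y) = (n - (x * y).support.card) + m7 := by rw [cyc_eq_card, hcard]
  -- the Riemann-Hurwitz inequality
  have hmain := cyc_add_le x y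
  rw [hcl, hcard] at hmain
  have hoc := oc_alt_le_one n (by omega)
  obtain ⟨j, hj⟩ := heven
  have e6 : 2 * n ≤ m2 + 2 * m3 + 6 * m7 + 2 := by omega
  have e2 : j ≤ n / 4 := (Nat.le_div_iff_mul_le (by norm_num)).mpr (by omega)
  have e3 : m3 ≤ n / 3 := (Nat.le_div_iff_mul_le (by norm_num)).mpr (by omega)
  have e4 : m7 ≤ n / 7 := (Nat.le_div_iff_mul_le (by norm_num)).mpr (by omega)
  omega
end

section
/- If x and y generate Alt(n) with x of order 2, y of order 3 and xy of order 7, and x is a product of 4k disjoint transpositions for some k, then the universal covering group (the double cover 2.Alt(n), n ≥ 8) admits a (2,3,7)-generating pair. -/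
open Equiv Equiv.Perm
open scoped commutatorElement

set_option linter.unusedSectionVars false
namespace Stmt7Aux

variable {α : Type*} [DecidableEq α] [Fintype α]

/-- list of swaps from point functions -/
def swapList (f g : ℕ → α) (s : ℕ) : List (Perm α) :=
  (List.range s).map (fun i => Equiv.swap (f i) (g i))

def swapProd (f g : ℕ → α) (s : ℕ) : Perm α := (swapList f g s).prod

/-- distinctness of all points -/
def Dis (f g : ℕ → α) (s : ℕ) : Prop :=
  ∀ i, i < s → ∀ j, j < s → f i ≠ g j ∧ (i ≠ j → f i ≠ f j ∧ g i ≠ g j)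

theorem swapList_succ (f g : ℕ → α) (s : ℕ) :
    swapList f g (s+1) = swapList f g s ++ [Equiv.swap (f s) (g s)] := by
  simp [swapList, List.range_succ]

theorem swapProd_succ (f g : ℕ → α) (s : ℕ) :
    swapProd f g (s+1) = swapProd f g s * Equiv.swap (f s) (g s) := by
  simp [swapProd, swapList_succ]

theorem swapProd_fix (f g : ℕ → α) (s : ℕ) (a : α)
    (h : ∀ i, i < s → a ≠ f i ∧ a ≠ g i) : swapProd f g s a = a := by
  induction s with
  | zero => simp [swapProd, swapList]
  | succ s ih =>
    rw [swapProd_succ, Perm.mul_apply,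
      Equiv.swap_apply_of_ne_of_ne (h s (by omega)).1 (h s (by omega)).2]
    exact ih (fun i hi => h i (by omega))

theorem swapProd_eval (f g : ℕ → α) (s : ℕ) (hD : Dis f g s) (j : ℕ) (hj : j < s) :
    swapProd f g s (f j) = g j ∧ swapProd f g s (g j) = f j := by
  induction s with
  | zero => omega
  | succ s ih =>
    rcases Nat.lt_or_ge j s with hjs | hjs
    · have h1 : f j ≠ f s := ((hD j (by omega) s (by omega)).2 (by omega)).1
      have h2 : f j ≠ g s := (hD j (by omega) s (by omega)).1
      have h3 : g j ≠ f s := fun h => ((hD s (by omega) j (by omega)).1) h.symm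
      have h4 : g j ≠ g s := ((hD j (by omega) s (by omega)).2 (by omega)).2
      rw [swapProd_succ, Perm.mul_apply, Perm.mul_apply,
        Equiv.swap_apply_of_ne_of_ne h1 h2, Equiv.swap_apply_of_ne_of_ne h3 h4]
      exact ih (fun i hi j hj => hD i (by omega) j (by omega)) hjs
    · have hjs : j = s := by omega
      subst hjs
      constructor
      · rw [swapProd_succ, Perm.mul_apply, Equiv.swap_apply_left]
        exact swapProd_fix f g j (g j) (fun i hi =>
          ⟨((hD i (by omega) j (by omega)).1).symm,
           (((hD i (by omega) j (by omega)).2 (by omega)).2).symm⟩)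
      · rw [swapProd_succ, Perm.mul_apply, Equiv.swap_apply_right]
        exact swapProd_fix f g j (f j) (fun i hi =>
          ⟨(((hD i (by omega) j (by omega)).2 (by omega)).1).symm,
           (hD j (by omega) i (by omega)).1⟩)

theorem swapProd_sq (f g : ℕ → α) (s : ℕ) (hD : Dis f g s) :
    swapProd f g s * swapProd f g s = 1 := by
  ext a
  rcases Classical.em (∃ i, i < s ∧ (a = f i ∨ a = g i)) with ⟨i, hi, ha | ha⟩ | h
  · subst ha
    simp [Perm.mul_apply, (swapProd_eval f g s hD i hi).1, (swapProd_eval f g s hD i hi).2]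
  · subst ha
    simp [Perm.mul_apply, (swapProd_eval f g s hD i hi).1, (swapProd_eval f g s hD i hi).2]
  · push_neg at h
    have hfix : swapProd f g s a = a := swapProd_fix f g s a (fun i hi => (h i hi))
    simp [Perm.mul_apply, hfix]

theorem swapList_isSwap (f g : ℕ → α) (s : ℕ) (hD : Dis f g s) :
    ∀ σ ∈ swapList f g s, IsSwap σ := by
  intro σ hσ
  simp only [swapList, List.mem_map, List.mem_range] at hσ
  obtain ⟨i, hi, rfl⟩ := hσ
  exact ⟨f i, g i, (hD i hi i hi).1, rfl⟩

theorem swapList_pairwise (f g : ℕ → α) (s : ℕ) (hD : Dis f g s) :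
    (swapList f g s).Pairwise Perm.Disjoint := by
  rw [swapList, List.pairwise_map]
  have := (List.pairwise_lt_range : List.Pairwise (· < ·) (List.range s))
  refine this.imp_of_mem ?_
  intro i j hi hj hij
  rw [List.mem_range] at hi hj
  intro a
  rcases Classical.em (a = f i ∨ a = g i) with ha | ha
  · right
    rcases ha with rfl | rfl
    · exact Equiv.swap_apply_of_ne_of_ne ((hD i hi j hj).2 (by omega)).1 ((hD i hi j hj).1)
    · exact Equiv.swap_apply_of_ne_of_ne (fun h => (hD j hj i hi).1 h.symm)
        ((hD i hi j hj).2 (by omega)).2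
  · left
    push_neg at ha
    exact Equiv.swap_apply_of_ne_of_ne ha.1 ha.2

theorem swapProd_cycleType (f g : ℕ → α) (s : ℕ) (hD : Dis f g s) :
    (swapProd f g s).cycleType = Multiset.replicate s 2 := by
  rw [swapProd, cycleType_eq (swapList f g s) rfl
    (fun σ hσ => by
      obtain ⟨a, b, hab, rfl⟩ := swapList_isSwap f g s hD σ hσ
      exact isCycle_swap hab)
    (swapList_pairwise f g s hD)]
  rw [← Multiset.coe_replicate]
  congr 1
  apply List.eq_replicate_iff.mpr
  constructor
  · simp [swapList]
  · intro b hb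
    simp only [List.mem_map, swapList] at hb
    obtain ⟨σ, hσ, rfl⟩ := hb
    obtain ⟨i, hi, rfl⟩ := hσ
    rw [List.mem_range] at hi
    rw [Function.comp_apply, Equiv.Perm.support_swap (hD i hi i hi).1]
    rw [Finset.card_insert_of_notMem (by simp [(hD i hi i hi).1]), Finset.card_singleton]

theorem swapProd_sign (f g : ℕ → α) (s : ℕ) (hD : Dis f g s) :
    Perm.sign (swapProd f g s) = (-1)^s := by
  rw [swapProd, sign_prod_list_swap (swapList_isSwap f g s hD)]
  simp [swapList]

end Stmt7Aux
namespace Stmt7Aux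
variable {α : Type*} [DecidableEq α] [Fintype α]

theorem swapProd_conj (f g : ℕ → α) (s : ℕ) (t : Perm α) :
    t * swapProd f g s * t⁻¹ = swapProd (fun i => t (f i)) (fun i => t (g i)) s := by
  induction s with
  | zero => simp [swapProd, swapList]
  | succ s ih =>
    rw [swapProd_succ, swapProd_succ, ← ih]
    have : t * (swapProd f g s * Equiv.swap (f s) (g s)) * t⁻¹ =
        t * swapProd f g s * t⁻¹ * (t * Equiv.swap (f s) (g s) * t⁻¹) := by group
    rw [this, ← Equiv.swap_apply_apply]

theorem swapProd_congr (f g f' g' : ℕ → α) (s : ℕ)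
    (hf : ∀ i, i < s → f i = f' i) (hg : ∀ i, i < s → g i = g' i) :
    swapProd f g s = swapProd f' g' s := by
  induction s with
  | zero => simp [swapProd, swapList]
  | succ s ih =>
    rw [swapProd_succ, swapProd_succ, ih (fun i hi => hf i (by omega)) (fun i hi => hg i (by omega)),
      hf s (by omega), hg s (by omega)]

end Stmt7Aux
namespace Stmt7Aux

/-- The model construction: decomposition of an even involution of cycle type 2^(4k). -/
theorem model (n k : ℕ) (hk : 1 ≤ k) (h8 : 8 * k ≤ n) :
    ∃ (u v τ x₀ t₀ : Equiv.Perm (Fin n)) (L : List (Equiv.Perm (Fin n))),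
      x₀ = u * v ∧
      x₀.cycleType = Multiset.replicate (4 * k) 2 ∧
      Equiv.Perm.sign u = 1 ∧ Equiv.Perm.sign τ = 1 ∧
      u * u = 1 ∧
      τ * u * τ⁻¹ = v ∧
      L.prod = v ∧
      (∀ c ∈ L, c ^ 3 = 1 ∧ Equiv.Perm.sign c = 1 ∧ Commute u c) ∧
      Equiv.Perm.sign t₀ = -1 ∧ Commute t₀ x₀ := by
  have hn : 0 < n := by omega
  set p : ℕ → Fin n := fun i => ⟨i % n, Nat.mod_lt _ hn⟩ with hp
  have pv : ∀ i, i < n → (p i : ℕ) = i := fun i hi => Nat.mod_eq_of_lt hi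
  have pne : ∀ a b, a < n → b < n → a ≠ b → p a ≠ p b := by
    intro a b ha hb hab h
    apply hab
    have := congrArg Fin.val h
    rwa [pv a ha, pv b hb] at this
  set f : ℕ → Fin n := fun i => p (2 * i) with hf
  set g : ℕ → Fin n := fun i => p (2 * i + 1) with hg
  set fv : ℕ → Fin n := fun i => p (4 * k + 2 * i) with hfv
  set gv : ℕ → Fin n := fun i => p (4 * k + 2 * i + 1) with hgv
  set gt : ℕ → Fin n := fun j => p (4 * k + j) with hgt
  set u := swapProd f g (2 * k) with hu
  set v := swapProd fv gv (2 * k) with hv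
  set τ := swapProd p gt (4 * k) with hτ
  set x₀ := swapProd f g (4 * k) with hx₀
  -- distinctness packages
  have Dfg : ∀ s, s ≤ 4 * k → Dis f g s := by
    intro s hs i hi j hj
    refine ⟨pne _ _ (by omega) (by omega) (by omega), fun hij =>
      ⟨pne _ _ (by omega) (by omega) (by omega), pne _ _ (by omega) (by omega) (by omega)⟩⟩
  have Dv : Dis fv gv (2 * k) := by
    intro i hi j hj
    refine ⟨pne _ _ (by omega) (by omega) (by omega), fun hij =>
      ⟨pne _ _ (by omega) (by omega) (by omega), pne _ _ (by omega) (by omega) (by omega)⟩⟩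
  have Dτ : Dis p gt (4 * k) := by
    intro i hi j hj
    refine ⟨pne _ _ (by omega) (by omega) (by omega), fun hij =>
      ⟨pne _ _ (by omega) (by omega) (by omega), pne _ _ (by omega) (by omega) (by omega)⟩⟩
  -- x₀ = u * v
  have hsplit : x₀ = u * v := by
    rw [hx₀, hu, hv, swapProd, swapProd, swapProd, swapList, swapList, swapList,
      show 4 * k = 2 * k + 2 * k by ring, List.range_add, List.map_append, List.prod_append,
      List.map_map]
    congr 1
    apply congrArg List.prod
    apply List.map_congr_left
    intro i _
    show Equiv.swap (f (2 * k + i)) (g (2 * k + i)) = Equiv.swap (fv i) (gv i)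
    congr 1
    · show p (2 * (2 * k + i)) = p (4 * k + 2 * i); congr 1; ring
    · show p (2 * (2 * k + i) + 1) = p (4 * k + 2 * i + 1); congr 1; ring
  -- conjugation
  have hτu : τ * u * τ⁻¹ = v := by
    rw [hu, swapProd_conj]
    apply swapProd_congr
    · intro i hi
      exact (swapProd_eval p gt (4 * k) Dτ (2 * i) (by omega)).1
    · intro i hi
      exact (swapProd_eval p gt (4 * k) Dτ (2 * i + 1) (by omega)).1
  -- the three-cycle list
  set q : ℕ → Fin n := fun j => p (4 * k + j) with hq
  have hqfv : ∀ i, fv i = q (2 * i) := fun i => rfl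
  have hqgv : ∀ i, gv i = q (2 * i + 1) := fun i => rfl
  set c1 : ℕ → Equiv.Perm (Fin n) := fun m =>
    Equiv.swap (q (4 * m)) (q (4 * m + 1)) * Equiv.swap (q (4 * m)) (q (4 * m + 2)) with hc1
  set c2 : ℕ → Equiv.Perm (Fin n) := fun m =>
    Equiv.swap (q (4 * m)) (q (4 * m + 2)) * Equiv.swap (q (4 * m + 2)) (q (4 * m + 3)) with hc2
  set L : List (Equiv.Perm (Fin n)) := (List.range k).flatMap (fun m => [c1 m, c2 m]) with hL
  have qne : ∀ a b, a < 4 * k → b < 4 * k → a ≠ b → q a ≠ q b := by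
    intro a b ha hb hab
    exact pne _ _ (by omega) (by omega) (by omega)
  have hc12 : ∀ m, m < k → c1 m * c2 m =
      Equiv.swap (fv (2 * m)) (gv (2 * m)) * Equiv.swap (fv (2 * m + 1)) (gv (2 * m + 1)) := by
    intro m hm
    have hA : fv (2 * m) = q (4 * m) := by show p _ = p _; congr 1; ring
    have hB : gv (2 * m) = q (4 * m + 1) := by show p _ = p _; congr 1; ring
    have hC : fv (2 * m + 1) = q (4 * m + 2) := by show p _ = p _; congr 1; ring
    have hD : gv (2 * m + 1) = q (4 * m + 3) := by show p _ = p _; congr 1; ring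
    rw [hA, hB, hC, hD]
    show (Equiv.swap (q (4 * m)) (q (4 * m + 1)) * Equiv.swap (q (4 * m)) (q (4 * m + 2))) *
        (Equiv.swap (q (4 * m)) (q (4 * m + 2)) * Equiv.swap (q (4 * m + 2)) (q (4 * m + 3))) =
        Equiv.swap (q (4 * m)) (q (4 * m + 1)) * Equiv.swap (q (4 * m + 2)) (q (4 * m + 3))
    rw [mul_assoc, ← mul_assoc (Equiv.swap (q (4 * m)) (q (4 * m + 2)))
      (Equiv.swap (q (4 * m)) (q (4 * m + 2))), Equiv.swap_mul_self, one_mul]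
  have hLprod : L.prod = v := by
    have main : ∀ K, K ≤ k → (((List.range K).flatMap (fun m => [c1 m, c2 m])).prod
        = swapProd fv gv (2 * K)) := by
      intro K
      induction K with
      | zero => intro _; simp [swapProd, swapList]
      | succ K ih =>
        intro hK
        rw [List.range_succ, List.flatMap_append, List.prod_append, ih (by omega)]
        have : ((([K]).flatMap (fun m => [c1 m, c2 m])).prod) = c1 K * c2 K := by simp
        rw [this, hc12 K (by omega), show 2 * (K + 1) = 2 * K + 1 + 1 by ring,
          swapProd_succ, swapProd_succ, mul_assoc]
    rw [hL, hv, main k le_rfl]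
  -- membership properties
  have hmem : ∀ c ∈ L, c ^ 3 = 1 ∧ Equiv.Perm.sign c = 1 ∧ Commute u c := by
    intro c hc
    rw [hL, List.mem_flatMap] at hc
    obtain ⟨m, hm, hcm⟩ := hc
    rw [List.mem_range] at hm
    have h3c : c.IsThreeCycle := by
      simp only [List.mem_cons, List.mem_singleton] at hcm
      rcases hcm with rfl | rfl | h
      · exact isThreeCycle_swap_mul_swap_same
          (qne _ _ (by omega) (by omega) (by omega))
          (qne _ _ (by omega) (by omega) (by omega))
          (qne _ _ (by omega) (by omega) (by omega))
      · rw [hc2]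
        simp only []
        rw [Equiv.swap_comm (q (4 * m)) (q (4 * m + 2))]
        exact isThreeCycle_swap_mul_swap_same
          (qne _ _ (by omega) (by omega) (by omega))
          (qne _ _ (by omega) (by omega) (by omega))
          (qne _ _ (by omega) (by omega) (by omega))
      · exact absurd h List.not_mem_nil
    refine ⟨?_, h3c.sign, ?_⟩
    · rw [← h3c.orderOf]; exact pow_orderOf_eq_one c
    · -- disjointness with u
      apply Equiv.Perm.Disjoint.commute
      intro a
      by_cases hca : c a = a
      · right; exact hca
      · left
        -- a is in the support of c, hence one of the q-points
        have hsup : a ∈ c.support := Equiv.Perm.mem_support.mpr hca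
        have hpts : a = q (4 * m) ∨ a = q (4 * m + 1) ∨ a = q (4 * m + 2) ∨ a = q (4 * m + 3) := by
          simp only [List.mem_cons, List.mem_singleton] at hcm
          rcases hcm with rfl | rfl | h
          · have := Equiv.Perm.support_mul_le _ _ hsup
            rw [Finset.sup_eq_union, Finset.mem_union] at this
            rcases this with h' | h' <;>
            · rw [Equiv.Perm.support_swap (qne _ _ (by omega) (by omega) (by omega))] at h'
              simp only [Finset.mem_insert, Finset.mem_singleton] at h'
              tauto
          · have := Equiv.Perm.support_mul_le _ _ hsup
            rw [Finset.sup_eq_union, Finset.mem_union] at this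
            rcases this with h' | h' <;>
            · rw [Equiv.Perm.support_swap (qne _ _ (by omega) (by omega) (by omega))] at h'
              simp only [Finset.mem_insert, Finset.mem_singleton] at h'
              tauto
          · exact absurd h List.not_mem_nil
        have fixq : ∀ j, j < 4 * k → u (q j) = q j := by
          intro j hj
          apply swapProd_fix
          intro i hi
          constructor
          · exact pne _ _ (by omega) (by omega) (by omega)
          · exact pne _ _ (by omega) (by omega) (by omega)
        rcases hpts with rfl | rfl | rfl | rfl <;>
          [exact fixq _ (by omega); exact fixq _ (by omega); exact fixq _ (by omega);
            exact fixq _ (by omega)]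
  -- t₀
  set t₀ := Equiv.swap (p 0) (p 1) with ht₀
  have hsign0 : Equiv.Perm.sign t₀ = -1 :=
    Equiv.Perm.sign_swap (pne 0 1 (by omega) (by omega) (by omega))
  have hct0 : Commute t₀ x₀ := by
    rw [hx₀, swapProd]
    apply Commute.list_prod_right
    intro s hs
    rw [swapList, List.mem_map] at hs
    obtain ⟨i, hi, rfl⟩ := hs
    rw [List.mem_range] at hi
    rcases Nat.eq_zero_or_pos i with rfl | hipos
    · have hf0 : f 0 = p 0 := rfl
      have hg0 : g 0 = p 1 := rfl
      rw [hf0, hg0]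
      exact Commute.refl t₀
    · apply Equiv.Perm.Disjoint.commute
      intro a
      by_cases ha : a = p 0 ∨ a = p 1
      · right
        rcases ha with rfl | rfl <;>
          exact Equiv.swap_apply_of_ne_of_ne
            (pne _ _ (by omega) (by omega) (by omega))
            (pne _ _ (by omega) (by omega) (by omega))
      · left
        push_neg at ha
        exact Equiv.swap_apply_of_ne_of_ne ha.1 ha.2
  refine ⟨u, v, τ, x₀, t₀, L, hsplit, ?_, ?_, ?_, ?_, hτu, hLprod, hmem, hsign0, hct0⟩
  · rw [hx₀, swapProd_cycleType f g (4 * k) (Dfg _ le_rfl)]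
  · rw [hu, swapProd_sign f g (2 * k) (Dfg _ (by omega))]
    exact Even.neg_one_pow ⟨k, by ring⟩
  · rw [hτ, swapProd_sign p gt (4 * k) Dτ]
    exact Even.neg_one_pow ⟨2 * k, by ring⟩
  · rw [hu]; exact swapProd_sq f g (2 * k) (Dfg _ (by omega))

end Stmt7Aux
namespace Stmt7Aux

theorem central_commutator {G : Type*} [Group G] (h1 h2 w1 w2 : G)
    (c1 : ∀ g, w1 * g = g * w1) (c2 : ∀ g, w2 * g = g * w2) :
    ⁅h1 * w1, h2 * w2⁆ = ⁅h1, h2⁆ := by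
  rw [commutatorElement_def, commutatorElement_def, mul_inv_rev, mul_inv_rev]
  calc h1 * w1 * (h2 * w2) * (w1⁻¹ * h1⁻¹) * (w2⁻¹ * h2⁻¹)
      = h1 * (w1 * h2) * (w2 * w1⁻¹ * h1⁻¹ * (w2⁻¹ * h2⁻¹)) := by group
    _ = h1 * (h2 * w1) * (w2 * w1⁻¹ * h1⁻¹ * (w2⁻¹ * h2⁻¹)) := by rw [c1 h2]
    _ = h1 * h2 * ((w1 * w2) * w1⁻¹ * h1⁻¹ * (w2⁻¹ * h2⁻¹)) := by group
    _ = h1 * h2 * ((w2 * w1) * w1⁻¹ * h1⁻¹ * (w2⁻¹ * h2⁻¹)) := by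
        rw [show w1 * w2 = w2 * w1 from (c2 w1).symm]
    _ = h1 * h2 * ((w2 * h1⁻¹) * (w2⁻¹ * h2⁻¹)) := by group
    _ = h1 * h2 * ((h1⁻¹ * w2) * (w2⁻¹ * h2⁻¹)) := by rw [c2 h1⁻¹]
    _ = h1 * h2 * h1⁻¹ * h2⁻¹ := by group

end Stmt7Aux

open Equiv Equiv.Perm

set_option maxHeartbeats 2000000 in
/-- Let G be a perfect group with a central kernel of order 2 mapping onto
    Alt(n) (n ≥ 8), i.e. the universal covering 2.Alt(n).  If Alt(n) is
    generated by x of order 2, y of order 3 with xy of order 7, where x is a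
    product of 4k disjoint transpositions, then G admits a
    (2,3,7)-generating pair. -/
theorem stmt_7 (n : ℕ) (hn : 8 ≤ n) (G : Type*) [Group G]
    (π : G →* Equiv.Perm (Fin n))
    (hperfect : commutator G = ⊤)
    (hker : Nat.card π.ker = 2)
    (hcentral : π.ker ≤ Subgroup.center G)
    (hrange : π.range = alternatingGroup (Fin n))
    (x y : Equiv.Perm (Fin n))
    (hx : orderOf x = 2) (hy : orderOf y = 3) (hxy : orderOf (x * y) = 7)
    (hgen : Subgroup.closure {x, y} = alternatingGroup (Fin n))
    (hcyc : ∃ k : ℕ, x.cycleType = Multiset.replicate (4 * k) 2) :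
    ∃ a b : G, orderOf a = 2 ∧ orderOf b = 3 ∧ orderOf (a * b) = 7 ∧
      Subgroup.closure {a, b} = ⊤ := by
  obtain ⟨k, hcycx⟩ := hcyc
  haveI : Fact (Nat.Prime 2) := ⟨by norm_num⟩
  haveI : Fact (Nat.Prime 3) := ⟨by norm_num⟩
  have hx1 : x ≠ 1 := by
    intro h; rw [h, orderOf_one] at hx; omega
  have hk : 1 ≤ k := by
    rcases Nat.eq_zero_or_pos k with rfl | h
    · exfalso
      apply hx1
      rw [← Equiv.Perm.cycleType_eq_zero]
      rw [hcycx]; simp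
    · exact h
  have h8 : 8 * k ≤ n := by
    have h1 : x.cycleType.sum = x.support.card := Equiv.Perm.sum_cycleType x
    rw [hcycx, Multiset.sum_replicate, smul_eq_mul] at h1
    have h2 : x.support.card ≤ n := by
      have := Finset.card_le_univ x.support
      simpa using this
    omega
  obtain ⟨u, v, τ, x₀, t₀, L, hx0uv, hcyc0, hsgnu, hsgnτ, husq, hτu, hLv, hLmem, hsgnt0, hct0⟩ :=
    Stmt7Aux.model n k hk h8
  -- kernel facts
  have hzsq : ∀ w ∈ π.ker, w * w = 1 := by
    intro w hw
    have h1 : (⟨w, hw⟩ : π.ker) ^ Nat.card π.ker = 1 := pow_card_eq_one'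
    rw [hker] at h1
    have h2 := congrArg (fun z : π.ker => (z : G)) h1
    simpa [pow_two] using h2
  have hzc : ∀ w ∈ π.ker, ∀ g : G, g * w = w * g :=
    fun w hw g => (Subgroup.mem_center_iff.mp (hcentral hw) g)
  have hzc' : ∀ w ∈ π.ker, ∀ g : G, w * g = g * w := fun w hw g => (hzc w hw g).symm
  have hlift : ∀ s : Equiv.Perm (Fin n), Equiv.Perm.sign s = 1 → ∃ g : G, π g = s := by
    intro s hs
    have hmem : s ∈ π.range := by
      rw [hrange]; exact Equiv.Perm.mem_alternatingGroup.mpr hs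
    exact hmem
  obtain ⟨ut, hut⟩ := hlift u hsgnu
  -- key commutation lemma
  have key : ∀ c : Equiv.Perm (Fin n), c ^ 3 = 1 → Commute u c →
      ∀ gc : G, π gc = c → Commute ut gc := by
    intro c hc3 hcu gc hgc
    set d := ut * gc * ut⁻¹ * gc⁻¹ with hd
    have hdker : d ∈ π.ker := by
      rw [MonoidHom.mem_ker, hd, map_mul, map_mul, map_mul, map_inv, map_inv, hut, hgc,
        show u * c = c * u from hcu]
      group
    have hdc : ∀ g : G, g * d = d * g := fun g => hzc d hdker g
    have hdsq : d * d = 1 := hzsq d hdker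
    have h1 : ut * gc = d * gc * ut := by rw [hd]; group
    have h2 : ut * (gc * gc) = d * d * (gc * gc) * ut := by
      calc ut * (gc * gc) = (ut * gc) * gc := by group
        _ = (d * gc * ut) * gc := by rw [h1]
        _ = d * gc * (ut * gc) := by group
        _ = d * gc * (d * gc * ut) := by rw [h1]
        _ = d * (gc * d) * (gc * ut) := by group
        _ = d * (d * gc) * (gc * ut) := by rw [← hdc gc]
        _ = d * d * (gc * gc) * ut := by group
    have h3 : ut * (gc * gc * gc) = d * d * d * (gc * gc * gc) * ut := by
      calc ut * (gc * gc * gc) = (ut * (gc * gc)) * gc := by group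
        _ = (d * d * (gc * gc) * ut) * gc := by rw [h2]
        _ = d * d * (gc * gc) * (ut * gc) := by group
        _ = d * d * (gc * gc) * (d * gc * ut) := by rw [h1]
        _ = d * d * (gc * gc * d) * (gc * ut) := by group
        _ = d * d * (d * (gc * gc)) * (gc * ut) := by rw [← hdc (gc * gc)]
        _ = d * d * d * (gc * gc * gc) * ut := by group
    have hccc : c * c * c = 1 := by
      have h := hc3
      rw [pow_succ, pow_succ, pow_one] at h
      exact h
    have hg3ker : gc * gc * gc ∈ π.ker := by
      rw [MonoidHom.mem_ker, map_mul, map_mul, hgc, hccc]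
    have hcen : ut * (gc * gc * gc) = (gc * gc * gc) * ut := hzc _ hg3ker ut
    have hddd : d * d * d = 1 := by
      have heq2 : (d * d * d) * ((gc * gc * gc) * ut) = 1 * ((gc * gc * gc) * ut) := by
        rw [one_mul]
        calc (d * d * d) * ((gc * gc * gc) * ut) = d * d * d * (gc * gc * gc) * ut := by group
          _ = ut * (gc * gc * gc) := h3.symm
          _ = (gc * gc * gc) * ut := hcen
      exact mul_right_cancel heq2
    have hd1 : d = 1 := by
      calc d = d * (d * d) := by rw [hdsq, mul_one]
        _ = 1 := by rw [← mul_assoc, hddd]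
    rw [hd] at hd1
    show ut * gc = gc * ut
    calc ut * gc = (ut * gc * ut⁻¹ * gc⁻¹) * (gc * ut) := by group
      _ = gc * ut := by rw [hd1, one_mul]
  -- lift the list of three-cycles
  have hliftL : ∀ (M : List (Equiv.Perm (Fin n))),
      (∀ c ∈ M, c ^ 3 = 1 ∧ Equiv.Perm.sign c = 1 ∧ Commute u c) →
      ∃ lG : List G, lG.map π = M ∧ ∀ g' ∈ lG, Commute ut g' := by
    intro M
    induction M with
    | nil => exact fun _ => ⟨[], rfl, by simp⟩
    | cons c M ih =>
      intro hM
      obtain ⟨lG, hmap, hcom⟩ := ih (fun c' hc' => hM c' (List.mem_cons_of_mem _ hc'))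
      obtain ⟨gc, hgc⟩ := hlift c (hM c List.mem_cons_self).2.1
      refine ⟨gc :: lG, by simp [hmap, hgc], ?_⟩
      intro g' hg'
      rcases List.mem_cons.mp hg' with h | h
      · rw [h]
        exact key c (hM c List.mem_cons_self).1 (hM c List.mem_cons_self).2.2 gc hgc
      · exact hcom g' h
  obtain ⟨lG, hmap, hcom⟩ := hliftL L hLmem
  set vt := lG.prod with hvt
  have hπvt : π vt = v := by
    rw [hvt, MonoidHom.map_list_prod, hmap, hLv]
  have hcomuv : Commute ut vt := Commute.list_prod_right lG ut hcom
  have hu2ker : ut * ut ∈ π.ker := by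
    rw [MonoidHom.mem_ker, map_mul, hut, husq]
  obtain ⟨tt, htt⟩ := hlift τ hsgnτ
  have hvt2 : vt * vt = ut * ut := by
    set w := vt * (tt * ut * tt⁻¹)⁻¹ with hw
    have hwker : w ∈ π.ker := by
      rw [MonoidHom.mem_ker, hw, map_mul, map_inv, map_mul, map_mul, map_inv,
        hπvt, htt, hut, hτu]
      group
    have hrw : vt = w * (tt * ut * tt⁻¹) := by rw [hw]; group
    calc vt * vt = (w * (tt * ut * tt⁻¹)) * (w * (tt * ut * tt⁻¹)) := by rw [← hrw]
      _ = w * ((tt * ut * tt⁻¹) * w) * (tt * ut * tt⁻¹) := by group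
      _ = w * (w * (tt * ut * tt⁻¹)) * (tt * ut * tt⁻¹) := by rw [hzc w hwker]
      _ = (w * w) * (tt * (ut * ut) * tt⁻¹) := by group
      _ = tt * (ut * ut) * tt⁻¹ := by rw [hzsq w hwker, one_mul]
      _ = (ut * ut) * tt * tt⁻¹ := by rw [hzc (ut * ut) hu2ker tt]
      _ = ut * ut := by group
  set xt := ut * vt with hxt
  have hπxt : π xt = x₀ := by rw [hxt, map_mul, hut, hπvt, hx0uv]
  have hxtsq : xt * xt = 1 := by
    calc xt * xt = ut * (vt * ut) * vt := by rw [hxt]; group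
      _ = ut * (ut * vt) * vt := by rw [← hcomuv.eq]
      _ = (ut * ut) * (vt * vt) := by group
      _ = (ut * ut) * (ut * ut) := by rw [hvt2]
      _ = 1 := hzsq _ hu2ker
  -- conjugate x₀ to x by an even permutation
  have hconj : IsConj x₀ x := Equiv.Perm.isConj_of_cycleType_eq (by rw [hcyc0, hcycx])
  obtain ⟨ρ0, hρ0⟩ := isConj_iff.mp hconj
  have hexρ : ∃ ρ : Equiv.Perm (Fin n), Equiv.Perm.sign ρ = 1 ∧ ρ * x₀ * ρ⁻¹ = x := by
    rcases Int.units_eq_one_or (Equiv.Perm.sign ρ0) with h | h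
    · exact ⟨ρ0, h, hρ0⟩
    · refine ⟨ρ0 * t₀, by rw [map_mul, h, hsgnt0]; norm_num, ?_⟩
      have hre : (ρ0 * t₀) * x₀ * (ρ0 * t₀)⁻¹ = ρ0 * (t₀ * x₀ * t₀⁻¹) * ρ0⁻¹ := by group
      have ht0x : t₀ * x₀ * t₀⁻¹ = x₀ := by rw [hct0.eq]; group
      rw [hre, ht0x, hρ0]
  obtain ⟨ρ, hsgnρ, hρ⟩ := hexρ
  obtain ⟨rt, hrt⟩ := hlift ρ hsgnρ
  set a0 := rt * xt * rt⁻¹ with ha0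
  have hπa0 : π a0 = x := by
    rw [ha0, map_mul, map_mul, map_inv, hrt, hπxt, hρ]
  have ha0sq : a0 * a0 = 1 := by
    calc a0 * a0 = rt * (xt * xt) * rt⁻¹ := by rw [ha0]; group
      _ = 1 := by rw [hxtsq]; group
  -- b of order 3
  have hysign : y ∈ alternatingGroup (Fin n) := by
    rw [← hgen]; exact Subgroup.subset_closure (by simp)
  obtain ⟨g0, hg0⟩ := hlift y (Equiv.Perm.mem_alternatingGroup.mp hysign)
  have hy3 : y ^ 3 = 1 := by rw [← hy]; exact pow_orderOf_eq_one y
  have hg3ker : g0 ^ 3 ∈ π.ker := by rw [MonoidHom.mem_ker, map_pow, hg0, hy3]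
  have hg6 : g0 ^ 6 = 1 := by
    have h1 := hzsq _ hg3ker
    calc g0 ^ 6 = g0 ^ 3 * g0 ^ 3 := by rw [← pow_add]
      _ = 1 := h1
  set b := g0 ^ 4 with hb
  have hπb : π b = y := by
    rw [hb, map_pow, hg0, show y ^ 4 = y ^ 3 * y from by rw [pow_succ], hy3, one_mul]
  have hb3 : b ^ 3 = 1 := by
    rw [hb, ← pow_mul, show 4 * 3 = 6 * 2 from rfl, pow_mul, hg6, one_pow]
  have hy1 : y ≠ 1 := by intro h; rw [h, orderOf_one] at hy; omega
  have hb1 : b ≠ 1 := fun h => hy1 (by rw [← hπb, h, map_one])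
  have horb : orderOf b = 3 := orderOf_eq_prime hb3 hb1
  -- adjust a by central element
  have hxy7 : (x * y) ^ 7 = 1 := by rw [← hxy]; exact pow_orderOf_eq_one _
  set e := (a0 * b) ^ 7 with he
  have heker : e ∈ π.ker := by
    rw [MonoidHom.mem_ker, he, map_pow, map_mul, hπa0, hπb, hxy7]
  set a := a0 * e with ha
  have hπa : π a = x := by
    have heπ : π e = 1 := heker
    rw [ha, map_mul, hπa0, heπ, mul_one]
  have hasq : a * a = 1 := by
    calc a * a = a0 * (e * a0) * e := by rw [ha]; group
      _ = a0 * (a0 * e) * e := by rw [← hzc e heker a0]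
      _ = (a0 * a0) * (e * e) := by group
      _ = 1 := by rw [ha0sq, hzsq e heker, one_mul]
  have ha1 : a ≠ 1 := fun h => hx1 (by rw [← hπa, h, map_one])
  have hora : orderOf a = 2 := orderOf_eq_prime (by rw [pow_two]; exact hasq) ha1
  have hab7 : (a * b) ^ 7 = 1 := by
    have h1 : a * b = (a0 * b) * e := by
      rw [ha]
      calc a0 * e * b = a0 * (e * b) := by group
        _ = a0 * (b * e) := by rw [hzc e heker b]
        _ = (a0 * b) * e := by group
    have hcom_e : Commute (a0 * b) e := hzc e heker (a0 * b)
    rw [h1, hcom_e.mul_pow, ← he]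
    have he2 : e ^ 2 = 1 := by rw [pow_two]; exact hzsq e heker
    have h8e : e * e ^ 7 = e ^ 8 := (pow_succ' e 7).symm
    rw [h8e, show (8 : ℕ) = 2 * 4 from rfl, pow_mul, he2, one_pow]
  have hord_ab : orderOf (a * b) = 7 := by
    have h7 : orderOf (a * b) ∣ 7 := orderOf_dvd_of_pow_eq_one hab7
    have h7' : orderOf (π (a * b)) = 7 := by rw [map_mul, hπa, hπb, hxy]
    have hdvd : (7 : ℕ) ∣ orderOf (a * b) := by
      rw [← h7']; exact orderOf_map_dvd π (a * b)
    exact Nat.dvd_antisymm h7 hdvd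
  refine ⟨a, b, hora, horb, hord_ab, ?_⟩
  set K := Subgroup.closure {a, b} with hK
  have hmapK : ∀ s ∈ alternatingGroup (Fin n), ∃ h ∈ K, π h = s := by
    intro s hs
    have hsm : s ∈ Subgroup.map π K := by
      rw [hK, MonoidHom.map_closure, show π '' {a, b} = {x, y} from by
        rw [Set.image_insert_eq, Set.image_singleton, hπa, hπb], hgen]
      exact hs
    obtain ⟨h, hh, hπh⟩ := hsm
    exact ⟨h, hh, hπh⟩
  have htop : ∀ g : G, ∃ h ∈ K, ∃ w ∈ π.ker, g = h * w := by
    intro g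
    have hs : π g ∈ alternatingGroup (Fin n) := by rw [← hrange]; exact ⟨g, rfl⟩
    obtain ⟨h, hh, hπh⟩ := hmapK (π g) hs
    refine ⟨h, hh, h⁻¹ * g, ?_, by group⟩
    rw [MonoidHom.mem_ker, map_mul, map_inv, hπh]
    group
  rw [eq_top_iff, ← hperfect, commutator_def]
  apply Subgroup.commutator_le.mpr
  intro g1 _ g2 _
  obtain ⟨h1, hh1, w1, hw1, rfl⟩ := htop g1
  obtain ⟨h2, hh2, w2, hw2, rfl⟩ := htop g2
  rw [Stmt7Aux.central_commutator h1 h2 w1 w2 (hzc' w1 hw1) (hzc' w2 hw2),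
    commutatorElement_def]
  exact mul_mem (mul_mem (mul_mem hh1 hh2) (inv_mem hh1)) (inv_mem hh2)
end

section
/- If a transitive subgroup of Sym(n) is generated by x of order 2 and y of order 3 with xy of order 7, where x fixes r points, y fixes s points and xy fixes t points, then 21r + 28s + 36t ≡ n (mod 84) and 21r + 28s + 36t ≤ n + 84. -/
open Equiv Equiv.Perm Finset

set_option linter.unusedSectionVars false

variable {α : Type*} [Fintype α] [DecidableEq α]

section Qcard

variable (r r' : Setoid α)

-- monotone: coarser relation has fewer classes
lemma qcard_le_of_le (h : ∀ a b, r.r a b → r'.r a b) :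
    Nat.card (Quotient r') ≤ Nat.card (Quotient r) := by
  apply Nat.card_le_card_of_surjective (Quotient.map' id (fun a b hab => h a b hab))
  intro q
  induction q using Quotient.ind with
  | _ a => exact ⟨Quotient.mk r a, rfl⟩

lemma qcard_eq_of_eq (h : ∀ a b, r.r a b ↔ r'.r a b) :
    Nat.card (Quotient r) = Nat.card (Quotient r') :=
  le_antisymm (qcard_le_of_le r' r (fun a b => (h a b).mpr))
    (qcard_le_of_le r r' (fun a b => (h a b).mp))

lemma qcard_exact (a b : α) (hab : ¬ r.r a b)
    (hchar : ∀ w w', r'.r w w' ↔ r.r w w' ∨ (r.r w a ∧ r.r b w') ∨ (r.r w b ∧ r.r a w')) :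
    Nat.card (Quotient r) = Nat.card (Quotient r') + 1 := by
  classical
  have hF : ∀ w w', r.r w w' →
      (if r.r w a then (Sum.inr () : Quotient r' ⊕ Unit) else Sum.inl (Quotient.mk r' w)) =
      (if r.r w' a then (Sum.inr () : Quotient r' ⊕ Unit) else Sum.inl (Quotient.mk r' w')) := by
    intro w w' hww'
    by_cases hwa : r.r w a
    · rw [if_pos hwa, if_pos (show r.r w' a from r.trans (r.symm hww') hwa)]
    · rw [if_neg hwa, if_neg (show ¬ r.r w' a from fun hw'a => hwa (r.trans hww' hw'a))]
      exact congrArg _ (Quotient.sound ((hchar w w').mpr (Or.inl hww')))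
  let F : Quotient r → Quotient r' ⊕ Unit := Quotient.lift _ hF
  have hbij : Function.Bijective F := by
    constructor
    · intro q1 q2
      induction q1 using Quotient.ind with
      | _ w =>
      induction q2 using Quotient.ind with
      | _ w' =>
      intro he
      by_cases hwa : r.r w a <;> by_cases hw'a : r.r w' a <;>
        simp only [F, Quotient.lift_mk, hwa, hw'a, if_true, if_false] at he
      · exact Quotient.sound (r.trans hwa (r.symm hw'a))
      · exact absurd he (by simp)
      · exact absurd he (by simp)
      · apply Quotient.sound
        rcases (hchar w w').mp (Quotient.exact (Sum.inl.inj he)) with h1 | ⟨h1, h2⟩ | ⟨h1, h2⟩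
        · exact h1
        · exact absurd h1 hwa
        · exact absurd (r.symm h2) hw'a
    · intro q
      rcases q with q | ⟨⟩
      · induction q using Quotient.ind with
        | _ w =>
        by_cases hwa : r.r w a
        · refine ⟨Quotient.mk r b, ?_⟩
          have hba : ¬ r.r b a := fun h => hab (r.symm h)
          simp only [F, Quotient.lift_mk, hba, if_false]
          refine congrArg _ (Quotient.sound ((hchar b w).mpr ?_))
          exact Or.inr (Or.inr ⟨r.refl b, r.symm hwa⟩)
        · exact ⟨Quotient.mk r w, by simp only [F, Quotient.lift_mk, hwa, if_false]⟩
      · refine ⟨Quotient.mk r a, ?_⟩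
        show (if r.r a a then (Sum.inr () : Quotient r' ⊕ Unit) else Sum.inl (Quotient.mk r' a)) = _
        rw [if_pos (show r.r a a from r.refl a)]
  rw [Nat.card_eq_of_bijective F hbij, Nat.card_sum]
  simp

lemma qcard_drop (a : α) (hle : ∀ w w', r.r w w' → r'.r w w')
    (hchar : ∀ w w', r'.r w w' → ¬ r.r w a → ¬ r.r w' a → r.r w w') :
    Nat.card (Quotient r) ≤ Nat.card (Quotient r') + 1 := by
  classical
  have hF : ∀ w w', r.r w w' →
      (if r.r w a then (Sum.inr () : Quotient r' ⊕ Unit) else Sum.inl (Quotient.mk r' w)) =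
      (if r.r w' a then (Sum.inr () : Quotient r' ⊕ Unit) else Sum.inl (Quotient.mk r' w')) := by
    intro w w' hww'
    by_cases hwa : r.r w a
    · rw [if_pos hwa, if_pos (show r.r w' a from r.trans (r.symm hww') hwa)]
    · rw [if_neg hwa, if_neg (show ¬ r.r w' a from fun hw'a => hwa (r.trans hww' hw'a))]
      exact congrArg _ (Quotient.sound (hle _ _ hww'))
  let F : Quotient r → Quotient r' ⊕ Unit := Quotient.lift _ hF
  have hinj : Function.Injective F := by
    intro q1 q2
    induction q1 using Quotient.ind with
    | _ w =>
    induction q2 using Quotient.ind with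
    | _ w' =>
    intro he
    by_cases hwa : r.r w a <;> by_cases hw'a : r.r w' a <;>
      simp only [F, Quotient.lift_mk, hwa, hw'a, if_true, if_false] at he
    · exact Quotient.sound (r.trans hwa (r.symm hw'a))
    · exact absurd he (by simp)
    · exact absurd he (by simp)
    · exact Quotient.sound (hchar w w' (Quotient.exact (Sum.inl.inj he)) hwa hw'a)
  calc Nat.card (Quotient r) ≤ Nat.card (Quotient r' ⊕ Unit) :=
        Nat.card_le_card_of_injective F hinj
    _ = Nat.card (Quotient r') + 1 := by rw [Nat.card_sum]; simp

end Qcard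
section Orb

def orbSetoid (S : Set (Perm α)) : Setoid α where
  r w w' := ∃ g ∈ Subgroup.closure S, g w = w'
  iseqv := by
    refine ⟨fun w => ⟨1, one_mem _, rfl⟩, ?_, ?_⟩
    · rintro w w' ⟨g, hg, rfl⟩
      exact ⟨g⁻¹, inv_mem hg, by simp⟩
    · rintro w w' w'' ⟨g, hg, rfl⟩ ⟨g', hg', rfl⟩
      exact ⟨g' * g, mul_mem hg' hg, by simp⟩

noncomputable def orbc (S : Set (Perm α)) : ℕ := Nat.card (Quotient (orbSetoid S))

lemma orbSetoid_mono {S T : Set (Perm α)} (h : S ⊆ ↑(Subgroup.closure T))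
    {a b : α} (hr : (orbSetoid S).r a b) : (orbSetoid T).r a b := by
  obtain ⟨g, hg, rfl⟩ := hr
  exact ⟨g, (Subgroup.closure_le _).mpr h hg, rfl⟩

lemma orbc_mono {S T : Set (Perm α)} (h : S ⊆ ↑(Subgroup.closure T)) :
    orbc T ≤ orbc S :=
  qcard_le_of_le _ _ (fun _ _ hr => orbSetoid_mono h hr)

lemma orb_insert_swap_char (S : Set (Perm α)) (u v : α) {w w' : α}
    (h : (orbSetoid (insert (Equiv.swap u v) S)).r w w') :
    (orbSetoid S).r w w' ∨
      (((orbSetoid S).r w u ∨ (orbSetoid S).r w v) ∧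
       ((orbSetoid S).r w' u ∨ (orbSetoid S).r w' v)) := by
  classical
  set R := (orbSetoid S).r with hR
  set R'' : α → α → Prop := fun w w' => R w w' ∨ ((R w u ∨ R w v) ∧ (R w' u ∨ R w' v)) with hR''
  have hrefl : ∀ w, R'' w w := fun w => Or.inl ((orbSetoid S).refl w)
  have hsymm : ∀ {w w'}, R'' w w' → R'' w' w := by
    rintro w w' (h1 | ⟨h1, h2⟩)
    · exact Or.inl ((orbSetoid S).symm h1)
    · exact Or.inr ⟨h2, h1⟩
  have htrans : ∀ {w w' w''}, R'' w w' → R'' w' w'' → R'' w w'' := by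
    rintro w w' w'' (h1 | ⟨h1, h2⟩) (h3 | ⟨h3, h4⟩)
    · exact Or.inl ((orbSetoid S).trans h1 h3)
    · exact Or.inr ⟨h3.imp ((orbSetoid S).trans h1) ((orbSetoid S).trans h1), h4⟩
    · exact Or.inr ⟨h1, h2.imp (fun h5 => (orbSetoid S).trans ((orbSetoid S).symm h3) h5)
        (fun h5 => (orbSetoid S).trans ((orbSetoid S).symm h3) h5)⟩
    · exact Or.inr ⟨h1, h4⟩
  obtain ⟨g, hg, rfl⟩ := h
  have key : ∀ g ∈ Subgroup.closure (insert (Equiv.swap u v) S), ∀ w, R'' w (g w) := by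
    intro g hg
    induction hg using Subgroup.closure_induction with
    | mem g hgmem =>
      rcases hgmem with rfl | hgS
      · intro w
        by_cases hwu : w = u
        · rw [hwu, Equiv.swap_apply_left]
          exact Or.inr ⟨Or.inl ((orbSetoid S).refl u), Or.inr ((orbSetoid S).refl v)⟩
        by_cases hwv : w = v
        · rw [hwv, Equiv.swap_apply_right]
          exact Or.inr ⟨Or.inr ((orbSetoid S).refl v), Or.inl ((orbSetoid S).refl u)⟩
        · rw [Equiv.swap_apply_of_ne_of_ne hwu hwv]
          exact hrefl w
      · intro w
        exact Or.inl ⟨g, Subgroup.subset_closure hgS, rfl⟩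
    | one => simpa using fun w => hrefl w
    | mul g g' hgmem hg'mem ihg ihg' =>
      intro w
      have := ihg' w
      have h2 := ihg (g' w)
      exact htrans this (by simpa using h2)
    | inv g hgmem ihg =>
      intro w
      have := ihg (g⁻¹ w)
      simp only [Perm.coe_inv, Equiv.apply_symm_apply] at this
      exact hsymm (by simpa using this)
  exact key g hg _

lemma htrans' {S : Set (Perm α)} {a b c : α} (h1 : (orbSetoid S).r a b)
    (h2 : (orbSetoid S).r b c) : (orbSetoid S).r a c := (orbSetoid S).trans h1 h2

lemma orbc_insert_swap_absorb {S : Set (Perm α)} {u v : α}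
    (hr : (orbSetoid S).r u v) : orbc (insert (Equiv.swap u v) S) = orbc S := by
  apply le_antisymm
  · exact orbc_mono (fun g hg => Subgroup.subset_closure (Set.mem_insert_of_mem _ hg))
  · apply qcard_le_of_le
    intro a b h
    rcases orb_insert_swap_char S u v h with h1 | ⟨h1, h2⟩
    · exact h1
    · have hau : (orbSetoid S).r a u := by
        rcases h1 with h1 | h1
        · exact h1
        · exact (orbSetoid S).trans h1 ((orbSetoid S).symm hr)
      have hbu : (orbSetoid S).r b u := by
        rcases h2 with h2 | h2
        · exact h2
        · exact (orbSetoid S).trans h2 ((orbSetoid S).symm hr)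
      exact (orbSetoid S).trans hau ((orbSetoid S).symm hbu)

lemma orbc_insert_swap_drop (S : Set (Perm α)) (u v : α) :
    orbc S ≤ orbc (insert (Equiv.swap u v) S) + 1 := by
  apply qcard_drop _ _ u
  · exact fun w w' h => orbSetoid_mono
      (fun g hg => Subgroup.subset_closure (Set.mem_insert_of_mem _ hg)) h
  · intro w w' h hwu hw'u
    rcases orb_insert_swap_char S u v h with h1 | ⟨h1, h2⟩
    · exact h1
    · have hwv : (orbSetoid S).r w v := h1.resolve_left hwu
      have hw'v : (orbSetoid S).r w' v := h2.resolve_left hw'u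
      exact (orbSetoid S).trans hwv ((orbSetoid S).symm hw'v)

end Orb
section Cyc

noncomputable def cyc (g : Perm α) : ℕ := Nat.card (Quotient (SameCycle.setoid g))

lemma cyc_le (g : Perm α) : cyc g ≤ Fintype.card α := by
  rw [← Nat.card_eq_fintype_card]
  exact Nat.card_le_card_of_surjective _ Quotient.mk''_surjective

lemma cyc_one : cyc (1 : Perm α) = Fintype.card α := by
  rw [← Nat.card_eq_fintype_card]
  apply Nat.card_congr
  refine ⟨Quotient.lift id (fun a b h => Equiv.Perm.sameCycle_one.mp h),
    fun a => Quotient.mk _ a, ?_, fun a => rfl⟩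
  intro q
  induction q using Quotient.ind with
  | _ a => rfl

lemma traj (g : Perm α) (u v : α) :
    ∀ j : ℕ, (∀ i, 1 ≤ i → i ≤ j → (g ^ i) v ≠ u ∧ (g ^ i) v ≠ v) →
      ((g * Equiv.swap u v) ^ (j + 1)) u = (g ^ (j + 1)) v := by
  intro j
  induction j with
  | zero =>
    intro _
    simp [Equiv.Perm.mul_apply]
  | succ j ih =>
    intro hyp
    have h1 : ((g * Equiv.swap u v) ^ (j + 2)) u
        = (g * Equiv.swap u v) (((g * Equiv.swap u v) ^ (j + 1)) u) := by
      rw [pow_succ']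
      rfl
    rw [h1, ih (fun i hi1 hi2 => hyp i hi1 (hi2.trans (Nat.le_succ j)))]
    have hne := hyp (j + 1) (by omega) le_rfl
    rw [Equiv.Perm.mul_apply, Equiv.swap_apply_of_ne_of_ne hne.1 hne.2]
    rw [← Equiv.Perm.mul_apply, ← pow_succ']

lemma pow_fix (f : Perm α) (w : α) (h : f w = w) : ∀ q : ℕ, (f ^ q) w = w := by
  intro q
  induction q with
  | zero => simp
  | succ q ih => rw [pow_succ']; rw [Equiv.Perm.mul_apply, ih, h]

lemma pow_mod_apply (g : Perm α) (w : α) (m j : ℕ) (hm : (g ^ m) w = w) :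
    (g ^ (j % m)) w = (g ^ j) w := by
  conv_rhs => rw [← Nat.mod_add_div j m]
  rw [pow_add, Equiv.Perm.mul_apply, pow_mul, pow_fix (g ^ m) w hm (j / m)]

lemma exists_ret (g : Perm α) (u v : α) :
    ∃ i, 0 < i ∧ ((g ^ i) v = u ∨ (g ^ i) v = v) :=
  ⟨orderOf g, orderOf_pos g, Or.inr (by rw [pow_orderOf_eq_one]; rfl)⟩

lemma merge_sameCycle {g : Perm α} {u v : α} (huv : u ≠ v) (hnc : ¬ g.SameCycle u v) :
    (g * Equiv.swap u v).SameCycle u v := by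
  classical
  have hex := exists_ret g u v
  set m := Nat.find hex with hmdef
  obtain ⟨hm0, hmuv⟩ := Nat.find_spec hex
  have hmin : ∀ i, 0 < i → i < m → (g ^ i) v ≠ u ∧ (g ^ i) v ≠ v := by
    intro i h1 h2
    have h3 := Nat.find_min hex h2
    push_neg at h3
    exact h3 h1
  have hmv : (g ^ m) v = v := by
    rcases hmuv with h | h
    · exact absurd (Equiv.Perm.SameCycle.symm ⟨(m : ℤ), by simpa using h⟩) hnc
    · exact h
  have htr : ((g * Equiv.swap u v) ^ m) u = v := by
    have h4 := traj g u v (m - 1) (fun i hi1 hi2 => hmin i hi1 (by omega))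
    rw [Nat.sub_add_cancel hm0] at h4
    rw [h4, hmv]
  exact ⟨(m : ℤ), by simpa using htr⟩

lemma split_not_sameCycle {g : Perm α} {u v : α} (huv : u ≠ v) (hc : g.SameCycle u v) :
    ¬ (g * Equiv.swap u v).SameCycle u v := by
  classical
  intro hsc
  have hex := exists_ret g u v
  set m := Nat.find hex with hmdef
  obtain ⟨hm0, hmuv⟩ := Nat.find_spec hex
  have hmin : ∀ i, 0 < i → i < m → (g ^ i) v ≠ u ∧ (g ^ i) v ≠ v := by
    intro i h1 h2
    have h3 := Nat.find_min hex h2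
    push_neg at h3
    exact h3 h1
  have hmu : (g ^ m) v = u := by
    rcases hmuv with h | h
    · exact h
    · exfalso
      obtain ⟨j, hj, hjv⟩ := hc.symm.exists_pow_eq'
      have hred : (g ^ (j % m)) v = u := by rw [pow_mod_apply g v m j h]; exact hjv
      have hjm : j % m < m := Nat.mod_lt _ hm0
      by_cases h0 : j % m = 0
      · rw [h0] at hred; simp at hred; exact huv hred.symm
      · exact (hmin _ (Nat.pos_of_ne_zero h0) hjm).1 hred
  have hfix : ((g * Equiv.swap u v) ^ m) u = u := by
    have h4 := traj g u v (m - 1) (fun i hi1 hi2 => hmin i hi1 (by omega))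
    rw [Nat.sub_add_cancel hm0] at h4
    rw [h4, hmu]
  obtain ⟨j, hj, hjv⟩ := hsc.exists_pow_eq'
  have hred : ((g * Equiv.swap u v) ^ (j % m)) u = v := by
    rw [pow_mod_apply _ u m j hfix]; exact hjv
  have hjm : j % m < m := Nat.mod_lt _ hm0
  by_cases h0 : j % m = 0
  · rw [h0] at hred; simp at hred; exact huv hred
  · have h4 := traj g u v (j % m - 1) (fun i hi1 hi2 => hmin i hi1 (by omega))
    rw [Nat.sub_add_cancel (Nat.pos_of_ne_zero h0)] at h4
    rw [h4] at hred
    exact (hmin _ (Nat.pos_of_ne_zero h0) hjm).2 hred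

lemma surgery_char {g : Perm α} {u v : α} (huv : u ≠ v) (hnc : ¬ g.SameCycle u v) (w w' : α) :
    (g * Equiv.swap u v).SameCycle w w' ↔
      (g.SameCycle w w' ∨ (g.SameCycle w u ∧ g.SameCycle v w') ∨
       (g.SameCycle w v ∧ g.SameCycle u w')) := by
  classical
  set h : Perm α := g * Equiv.swap u v with hh
  set R' : α → α → Prop := fun w w' =>
    (g.SameCycle w w' ∨ (g.SameCycle w u ∧ g.SameCycle v w') ∨
     (g.SameCycle w v ∧ g.SameCycle u w')) with hR'
  have hmerge : h.SameCycle u v := merge_sameCycle huv hnc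
  constructor
  · -- forward
    intro hsc
    have htrans : ∀ {a b c : α}, R' a b → R' b c → R' a c := by
      rintro a b c (h1 | ⟨h1, h2⟩ | ⟨h1, h2⟩) (h3 | ⟨h3, h4⟩ | ⟨h3, h4⟩)
      · exact Or.inl (h1.trans h3)
      · exact Or.inr (Or.inl ⟨h1.trans h3, h4⟩)
      · exact Or.inr (Or.inr ⟨h1.trans h3, h4⟩)
      · exact Or.inr (Or.inl ⟨h1, h2.trans h3⟩)
      · exact absurd (h2.trans h3).symm hnc
      · exact Or.inl (h1.trans h4)
      · exact Or.inr (Or.inr ⟨h1, h2.trans h3⟩)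
      · exact Or.inl (h1.trans h4)
      · exact absurd (h2.trans h3) hnc
    have hstep : ∀ a : α, R' a (h a) := by
      intro a
      by_cases hau : a = u
      · subst hau
        have : h a = g v := by rw [hh]; simp [Equiv.Perm.mul_apply]
        rw [this]
        exact Or.inr (Or.inl ⟨Equiv.Perm.SameCycle.rfl, ⟨1, by simp⟩⟩)
      by_cases hav : a = v
      · subst hav
        have : h a = g u := by rw [hh]; simp [Equiv.Perm.mul_apply]
        rw [this]
        exact Or.inr (Or.inr ⟨Equiv.Perm.SameCycle.rfl, ⟨1, by simp⟩⟩)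
      · have : h a = g a := by
          rw [hh]; simp [Equiv.Perm.mul_apply, Equiv.swap_apply_of_ne_of_ne hau hav]
        rw [this]
        exact Or.inl ⟨1, by simp⟩
    obtain ⟨i, hi, rfl⟩ := hsc.exists_pow_eq'
    clear hi hsc
    induction i with
    | zero => exact Or.inl (by simpa using Equiv.Perm.SameCycle.rfl)
    | succ i ih =>
      have h5 : (h ^ (i + 1)) w = h ((h ^ i) w) := by rw [pow_succ']; rfl
      rw [h5]
      exact htrans ih (hstep ((h ^ i) w))
  · -- backward
    have hstep2 : ∀ a : α, h.SameCycle a (h a) := fun a => ⟨1, by simp⟩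
    have hlift : ∀ {a b : α}, g.SameCycle a b → h.SameCycle a b := by
      intro a b hab
      obtain ⟨i, hi, rfl⟩ := hab.exists_pow_eq'
      clear hi hab
      induction i with
      | zero => simpa using Equiv.Perm.SameCycle.rfl
      | succ i ih =>
        have h5 : (g ^ (i + 1)) a = g ((g ^ i) a) := by rw [pow_succ']; rfl
        rw [h5]
        refine ih.trans ?_
        set c := (g ^ i) a with hc
        by_cases hcu : c = u
        · subst hcu
          have h6 : h v = g c := by rw [hh]; simp [Equiv.Perm.mul_apply]
          exact hmerge.trans (h6 ▸ hstep2 v)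
        by_cases hcv : c = v
        · subst hcv
          have h6 : h u = g c := by rw [hh]; simp [Equiv.Perm.mul_apply]
          exact hmerge.symm.trans (h6 ▸ hstep2 u)
        · have h6 : h c = g c := by
            rw [hh]; simp [Equiv.Perm.mul_apply, Equiv.swap_apply_of_ne_of_ne hcu hcv]
          exact h6 ▸ hstep2 c
    rintro (h1 | ⟨h1, h2⟩ | ⟨h1, h2⟩)
    · exact hlift h1
    · exact (hlift h1).trans (hmerge.trans (hlift h2))
    · exact (hlift h1).trans (hmerge.symm.trans (hlift h2))

lemma cyc_merge {g : Perm α} {u v : α} (huv : u ≠ v) (hnc : ¬ g.SameCycle u v) :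
    cyc g = cyc (g * Equiv.swap u v) + 1 :=
  qcard_exact (SameCycle.setoid g) (SameCycle.setoid (g * Equiv.swap u v)) u v hnc
    (fun w w' => surgery_char huv hnc w w')

lemma cyc_split {g : Perm α} {u v : α} (huv : u ≠ v) (hc : g.SameCycle u v) :
    cyc (g * Equiv.swap u v) = cyc g + 1 := by
  have h1 := split_not_sameCycle huv hc
  have h2 := cyc_merge huv h1
  rwa [mul_assoc, Equiv.swap_mul_self, mul_one] at h2

end Cyc
section Ree

lemma orbc_pair_one (x : Perm α) : orbc ({x, 1} : Set (Perm α)) = cyc x := by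
  apply qcard_eq_of_eq
  intro a b
  constructor
  · rintro ⟨g, hg, rfl⟩
    have hpow : ∃ k : ℤ, g = x ^ k := by
      induction hg using Subgroup.closure_induction with
      | mem g hgmem =>
        rcases hgmem with rfl | hgmem
        · exact ⟨1, by simp⟩
        · rw [Set.mem_singleton_iff] at hgmem
          exact ⟨0, by simp [hgmem]⟩
      | one => exact ⟨0, by simp⟩
      | mul g g' _ _ ih ih' =>
        obtain ⟨k, rfl⟩ := ih
        obtain ⟨k', rfl⟩ := ih'
        exact ⟨k + k', (zpow_add x k k').symm⟩
      | inv g _ ih =>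
        obtain ⟨k, rfl⟩ := ih
        exact ⟨-k, (zpow_neg x k).symm⟩
    obtain ⟨k, rfl⟩ := hpow
    exact ⟨k, rfl⟩
  · rintro ⟨k, rfl⟩
    exact ⟨x ^ k, zpow_mem (Subgroup.subset_closure (Set.mem_insert x _)) k, rfl⟩

lemma ree_aux : ∀ (k : ℕ) (x y : Perm α), Fintype.card α - cyc y ≤ k →
    cyc x + cyc y + cyc (x * y) ≤ Fintype.card α + 2 * orbc ({x, y} : Set (Perm α)) := by
  intro k
  induction k with
  | zero =>
    intro x y hk
    -- show y = 1
    by_cases hy1 : y = 1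
    · subst hy1
      rw [cyc_one, mul_one, orbc_pair_one]
      omega
    · exfalso
      obtain ⟨b, hb⟩ : ∃ b, y b ≠ b := by
        by_contra hall
        push_neg at hall
        exact hy1 (Equiv.ext hall)
      have huv : b ≠ y⁻¹ b := fun h => hb (by conv_lhs => rw [h]; rw [Perm.coe_inv, Equiv.apply_symm_apply]) 
      have hsc : y.SameCycle b (y⁻¹ b) := ⟨-1, by simp⟩
      have h1 : cyc (y * Equiv.swap b (y⁻¹ b)) = cyc y + 1 := cyc_split huv hsc
      have h2 := cyc_le (y * Equiv.swap b (y⁻¹ b))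
      omega
  | succ k IH =>
    intro x y hk
    by_cases hy1 : y = 1
    · subst hy1
      rw [cyc_one, mul_one, orbc_pair_one]
      omega
    obtain ⟨b, hb⟩ : ∃ b, y b ≠ b := by
      by_contra hall
      push_neg at hall
      exact hy1 (Equiv.ext hall)
    set u := b with hu
    set v := y⁻¹ b with hv
    have huv : u ≠ v := fun h => hb (by conv_lhs => rw [h, hv]; rw [Perm.coe_inv, Equiv.apply_symm_apply])
    have hscy : y.SameCycle u v := ⟨-1, by simp [hv, hu]⟩
    set τ := Equiv.swap u v with hτ
    set y' := y * τ with hy'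
    have hcy' : cyc y' = cyc y + 1 := cyc_split huv hscy
    have hcy'le : cyc y' ≤ Fintype.card α := cyc_le y'
    have hk' : Fintype.card α - cyc y' ≤ k := by omega
    have hIH := IH x y' hk'
    have hxy' : x * y' = (x * y) * τ := by rw [hy', mul_assoc]
    have hyy' : y = y' * τ := by rw [hy', mul_assoc, hτ, Equiv.swap_mul_self, mul_one]
    have hsub : ({x, y} : Set (Perm α)) ⊆
        ↑(Subgroup.closure (insert τ ({x, y'} : Set (Perm α)))) := by
      intro g hg
      rcases hg with rfl | hg
      · exact Subgroup.subset_closure (Set.mem_insert_of_mem _ (Set.mem_insert g _))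
      · rw [Set.mem_singleton_iff] at hg
        subst hg
        rw [hyy']
        exact mul_mem
          (Subgroup.subset_closure (Set.mem_insert_of_mem _ (Set.mem_insert_of_mem _ rfl)))
          (Subgroup.subset_closure (Set.mem_insert _ _))
    have horb1 : orbc (insert τ ({x, y'} : Set (Perm α))) ≤ orbc ({x, y} : Set (Perm α)) :=
      orbc_mono hsub
    by_cases hscz : (x * y).SameCycle u v
    · -- split case for z
      have hcz' : cyc (x * y') = cyc (x * y) + 1 := by rw [hxy']; exact cyc_split huv hscz
      have horb2 : orbc ({x, y'} : Set (Perm α)) ≤ orbc (insert τ ({x, y'} : Set (Perm α))) + 1 :=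
        orbc_insert_swap_drop _ u v
      omega
    · -- merge case for z
      have hcz' : cyc (x * y) = cyc (x * y') + 1 := by rw [hxy']; exact cyc_merge huv hscz
      have hsczm : ((x * y) * τ).SameCycle u v := merge_sameCycle huv hscz
      have hzmem : (x * y) * τ ∈ Subgroup.closure ({x, y'} : Set (Perm α)) := by
        rw [← hxy']
        exact mul_mem (Subgroup.subset_closure (Set.mem_insert x _))
          (Subgroup.subset_closure (Set.mem_insert_of_mem _ rfl))
      have hruv : (orbSetoid ({x, y'} : Set (Perm α))).r u v := by
        obtain ⟨m, hm⟩ := hsczm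
        exact ⟨((x * y) * τ) ^ m, zpow_mem hzmem m, hm⟩
      have horb2 : orbc (insert τ ({x, y'} : Set (Perm α))) = orbc ({x, y'} : Set (Perm α)) :=
        orbc_insert_swap_absorb hruv
      omega

lemma ree (x y : Perm α) :
    cyc x + cyc y + cyc (x * y) ≤ Fintype.card α + 2 * orbc ({x, y} : Set (Perm α)) :=
  ree_aux (Fintype.card α) x y (Nat.sub_le _ _)

end Ree
section Count

lemma fixed_of_pow_fixed {g : Perm α} {p : ℕ} (hp : p.Prime) (ho : orderOf g = p)
    {a : α} {d : ℕ} (hd : 0 < d) (hdp : d < p) (h : (g ^ d) a = a) : g a = a := by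
  have hnd : ¬ p ∣ d := fun hdvd => absurd (Nat.le_of_dvd hd hdvd) (by omega)
  have hcop : Nat.Coprime d (orderOf g) := by
    rw [ho]
    exact ((Nat.Prime.coprime_iff_not_dvd hp).mpr hnd).symm
  obtain ⟨m, hm⟩ := exists_pow_eq_self_of_coprime hcop
  calc g a = ((g ^ d) ^ m) a := by rw [hm]
    _ = a := pow_fix (g ^ d) a h m

lemma sum_split {β : Type*} (s' : Finset β) (P : β → Prop) [DecidablePred P] (f : β → ℕ)
    (k1 k2 : ℕ) (h1 : ∀ b ∈ s', P b → f b = k1) (h2 : ∀ b ∈ s', ¬ P b → f b = k2) :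
    ∑ b ∈ s', f b = (s'.filter P).card * k1 + (s'.card - (s'.filter P).card) * k2 := by
  classical
  induction s' using Finset.induction_on with
  | empty => simp
  | insert _ _ ha ih =>
    rename_i a t
    have hfa : (Finset.filter P t).card ≤ t.card := Finset.card_filter_le _ _
    rw [Finset.sum_insert ha, Finset.filter_insert, Finset.card_insert_of_notMem ha,
      ih (fun b hb => h1 b (Finset.mem_insert_of_mem hb))
         (fun b hb => h2 b (Finset.mem_insert_of_mem hb))]
    by_cases hPa : P a
    · rw [if_pos hPa, Finset.card_insert_of_notMem (fun hmem => ha (Finset.mem_of_mem_filter a hmem)),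
        h1 a (Finset.mem_insert_self a t) hPa]
      have h' : t.card + 1 - ((Finset.filter P t).card + 1) = t.card - (Finset.filter P t).card := by
        omega
      rw [h', Nat.succ_mul]
      ring
    · rw [if_neg hPa, h2 a (Finset.mem_insert_self a t) hPa]
      have : t.card + 1 - (Finset.filter P t).card = (t.card - (Finset.filter P t).card) + 1 := by
        omega
      rw [this, Nat.succ_mul]
      ring

lemma prime_count (g : Perm α) (p : ℕ) (hp : p.Prime) (ho : orderOf g = p) :
    ∃ m : ℕ, cyc g = (Finset.univ.filter fun a => g a = a).card + m ∧
      Fintype.card α = (Finset.univ.filter fun a => g a = a).card + p * m := by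
  classical
  set s := SameCycle.setoid g with hs
  letI : Fintype (Quotient s) := Fintype.ofFinite _
  have hcyc : cyc g = Fintype.card (Quotient s) := Nat.card_eq_fintype_card
  -- fiber description for fixed points
  have hA : ∀ a : α, g a = a →
      (Finset.univ.filter fun b => Quotient.mk s b = Quotient.mk s a) = {a} := by
    intro a ha
    ext b
    simp only [Finset.mem_filter, Finset.mem_univ, true_and, Finset.mem_singleton]
    constructor
    · intro hb
      exact Equiv.Perm.SameCycle.eq_of_right (Quotient.eq.mp hb) ha
    · rintro rfl; rfl
  -- fiber description for moved points
  have hB : ∀ a : α, g a ≠ a →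
      (Finset.univ.filter fun b => Quotient.mk s b = Quotient.mk s a).card = p := by
    intro a ha
    have himg : (Finset.univ.filter fun b => Quotient.mk s b = Quotient.mk s a) =
        (Finset.range p).image (fun i => (g ^ i) a) := by
      ext b
      simp only [Finset.mem_filter, Finset.mem_univ, true_and, Finset.mem_image,
        Finset.mem_range]
      constructor
      · intro hb
        have hsc : g.SameCycle a b := (Quotient.eq.mp hb).symm
        obtain ⟨i, hi, hib⟩ := hsc.exists_pow_eq'
        exact ⟨i, by rwa [ho] at hi, hib⟩
      · rintro ⟨i, hi, rfl⟩
        exact Quotient.sound (Equiv.Perm.sameCycle_pow_left.mpr Equiv.Perm.SameCycle.rfl)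
    rw [himg, Finset.card_image_of_injOn, Finset.card_range]
    have key : ∀ i j : ℕ, i < j → j < p → (g ^ i) a = (g ^ j) a → False := by
      intro i j hlt hjp hije
      have hkey : (g ^ (j - i)) ((g ^ i) a) = (g ^ i) a := by
        rw [← Equiv.Perm.mul_apply, ← pow_add]
        rw [Nat.sub_add_cancel (le_of_lt hlt)]
        exact hije.symm
      have hfix : g ((g ^ i) a) = (g ^ i) a :=
        fixed_of_pow_fixed hp ho (by omega) (by omega) hkey
      have e1 : (g ^ (i + 1)) a = g ((g ^ i) a) := by rw [pow_succ']; rfl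
      have e2 : (g ^ (i + 1)) a = (g ^ i) (g a) := by rw [pow_succ]; rfl
      have : (g ^ i) (g a) = (g ^ i) a := by rw [← e2, e1, hfix]
      exact ha ((g ^ i).injective this)
    intro i hi j hj hij
    simp only [Finset.mem_coe, Finset.mem_range] at hi hj
    by_contra hne
    rcases lt_or_gt_of_ne hne with h | h
    · exact key i j h hj hij
    · exact key j i h hi hij.symm
  -- total count
  have htot : Fintype.card α =
      ∑ q : Quotient s, (Finset.univ.filter fun a => Quotient.mk s a = q).card := by
    rw [← Finset.card_univ (α := α)]
    exact Finset.card_eq_sum_card_fiberwise (fun a _ => Finset.mem_univ _)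
  set T := Finset.univ.filter (fun q : Quotient s => g (Quotient.out q) = Quotient.out q)
    with hT
  have hTr : T.card = (Finset.univ.filter fun a => g a = a).card := by
    symm
    apply Finset.card_bij' (i := fun a _ => Quotient.mk s a) (j := fun q _ => Quotient.out q)
    · intro a ha
      simp only [Finset.mem_filter, Finset.mem_univ, true_and] at ha
      simp only [hT, Finset.mem_filter, Finset.mem_univ, true_and]
      have hout : (Quotient.mk s a).out = a :=
        Equiv.Perm.SameCycle.eq_of_right (Quotient.mk_out a) ha
      rw [hout]
      exact ha
    · intro q hq
      simp only [hT, Finset.mem_filter, Finset.mem_univ, true_and] at hq ⊢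
      exact hq
    · intro a ha
      simp only [Finset.mem_filter, Finset.mem_univ, true_and] at ha
      exact Equiv.Perm.SameCycle.eq_of_right (Quotient.mk_out a) ha
    · intro q hq
      exact Quotient.out_eq q
  have hsum : Fintype.card α = T.card * 1 + (Fintype.card (Quotient s) - T.card) * p := by
    rw [htot, hT]
    rw [← Finset.card_univ (α := Quotient s)]
    apply sum_split
    · intro q _ hfixq
      have hq : (Finset.univ.filter fun a => Quotient.mk s a = q) =
          (Finset.univ.filter fun a => Quotient.mk s a = Quotient.mk s (Quotient.out q)) := by
        rw [Quotient.out_eq]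
      rw [hq, hA _ hfixq, Finset.card_singleton]
    · intro q _ hfixq
      have hq : (Finset.univ.filter fun a => Quotient.mk s a = q) =
          (Finset.univ.filter fun a => Quotient.mk s a = Quotient.mk s (Quotient.out q)) := by
        rw [Quotient.out_eq]
      rw [hq]
      exact hB _ hfixq
  have hTle : T.card ≤ Fintype.card (Quotient s) := by
    calc T.card ≤ Finset.univ.card := Finset.card_filter_le _ _
      _ = _ := Finset.card_univ
  refine ⟨Fintype.card (Quotient s) - T.card, ?_, ?_⟩
  · rw [hcyc, ← hTr]; omega
  · rw [hsum, ← hTr]; ring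

end Count
section Sign

lemma cycleType_replicate {g : Perm α} {p : ℕ} (hp : p.Prime) (ho : orderOf g = p) :
    g.cycleType = Multiset.replicate (Multiset.card g.cycleType) p := by
  apply Multiset.eq_replicate_card.mpr
  intro l hl
  have h1 : l ∣ p := by
    rw [← ho, ← Equiv.Perm.lcm_cycleType]
    exact Multiset.dvd_lcm hl
  have h2 := Equiv.Perm.two_le_of_mem_cycleType hl
  rcases Nat.Prime.eq_one_or_self_of_dvd hp l h1 with h | h
  · omega
  · exact h

lemma support_card_eq {g : Perm α} {p : ℕ} (hp : p.Prime) (ho : orderOf g = p) :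
    g.support.card = Multiset.card g.cycleType * p := by
  rw [← Equiv.Perm.sum_cycleType]
  conv_lhs => rw [cycleType_replicate hp ho]
  rw [Multiset.sum_replicate, smul_eq_mul]

lemma sign_eq_pow {g : Perm α} {p : ℕ} (hp : p.Prime) (ho : orderOf g = p) :
    Equiv.Perm.sign g = (-1 : ℤˣ) ^ (Multiset.card g.cycleType * (p + 1)) := by
  rw [Equiv.Perm.sign_of_cycleType]
  congr 1
  conv_lhs => rw [cycleType_replicate hp ho]
  rw [Multiset.sum_replicate, Multiset.card_replicate, smul_eq_mul]
  ring

lemma even_card_cycleType_x {x y : Perm α} (hx : orderOf x = 2) (hy : orderOf y = 3)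
    (hz : orderOf (x * y) = 7) : Even (Multiset.card x.cycleType) := by
  have h1 := sign_eq_pow Nat.prime_two hx
  have h2 := sign_eq_pow Nat.prime_three hy
  have h3 := sign_eq_pow (by norm_num : Nat.Prime 7) hz
  have hy1 : Equiv.Perm.sign y = 1 := by
    rw [h2]
    exact Even.neg_one_pow ⟨Multiset.card y.cycleType * 2, by ring⟩
  have hz1 : Equiv.Perm.sign (x * y) = 1 := by
    rw [h3]
    exact Even.neg_one_pow ⟨Multiset.card (x * y).cycleType * 4, by ring⟩
  have hx1 : Equiv.Perm.sign x = 1 := by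
    have hm := Equiv.Perm.sign_mul x y
    rw [hz1, hy1, mul_one] at hm
    exact hm.symm
  rcases Nat.even_or_odd (Multiset.card x.cycleType) with he | hodd
  · exact he
  · exfalso
    rw [h1] at hx1
    have hoddm : Odd (Multiset.card x.cycleType * 3) := by
      rcases hodd with ⟨k, hk⟩
      exact ⟨3 * k + 1, by omega⟩
    rw [Odd.neg_one_pow hoddm] at hx1
    exact absurd hx1 (by decide)

lemma fix_add_support (g : Perm α) :
    (Finset.univ.filter fun a => g a = a).card + g.support.card = Fintype.card α := by
  classical
  have hsupp : (Finset.univ.filter fun a => ¬ g a = a) = g.support := by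
    ext a
    simp [Equiv.Perm.mem_support]
  rw [← hsupp, ← Finset.card_univ]
  exact Finset.card_filter_add_card_filter_not _

lemma orbc_pretrans {S : Set (Perm α)}
    (h : MulAction.IsPretransitive (Subgroup.closure S) α) : orbc S ≤ 1 := by
  have hall : ∀ a b : α, (orbSetoid S).r a b := by
    intro a b
    obtain ⟨g, hg⟩ := MulAction.exists_smul_eq (Subgroup.closure S) a b
    exact ⟨(g : Perm α), g.2, hg⟩
  rcases isEmpty_or_nonempty α with he | hne
  · haveI : IsEmpty (Quotient (orbSetoid S)) :=
      ⟨fun q => Quotient.ind (motive := fun _ => False) (fun a => he.false a) q⟩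
    simp [orbc, Nat.card_of_isEmpty]
  · obtain ⟨a⟩ := hne
    haveI : Subsingleton (Quotient (orbSetoid S)) := ⟨fun q1 q2 => by
      induction q1 using Quotient.ind with
      | _ w =>
      induction q2 using Quotient.ind with
      | _ w' =>
      exact Quotient.sound (hall w w')⟩
    rw [orbc, Nat.card_of_subsingleton (Quotient.mk _ a)]

end Sign

/-- For a Hurwitz generating triple of a transitive permutation group of
    degree n, with r, s, t the fixed-point counts of the order-2, order-3
    and order-7 generators, the genus formula n = 84(g-1) + 21r + 28s + 36t
    (g ≥ 0) gives 21r + 28s + 36t ≡ n (mod 84) and 21r + 28s + 36t ≤ n + 84. -/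
theorem stmt_18 (n : ℕ) (x y : Equiv.Perm (Fin n))
    (hx : orderOf x = 2) (hy : orderOf y = 3) (hxy : orderOf (x * y) = 7)
    (htrans : MulAction.IsPretransitive (Subgroup.closure {x, y}) (Fin n)) :
    (21 * (Finset.univ.filter fun a => x a = a).card +
     28 * (Finset.univ.filter fun a => y a = a).card +
     36 * (Finset.univ.filter fun a => (x * y) a = a).card) ≡ n [MOD 84] ∧
    (21 * (Finset.univ.filter fun a => x a = a).card +
     28 * (Finset.univ.filter fun a => y a = a).card +
     36 * (Finset.univ.filter fun a => (x * y) a = a).card) ≤ n + 84 := by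
  classical
  have hcard : Fintype.card (Fin n) = n := Fintype.card_fin n
  obtain ⟨mx, hmx1, hmx2⟩ := prime_count x 2 Nat.prime_two hx
  obtain ⟨my, hmy1, hmy2⟩ := prime_count y 3 Nat.prime_three hy
  obtain ⟨mz, hmz1, hmz2⟩ := prime_count (x * y) 7 (by norm_num) hxy
  have hree := ree x y
  have horb : orbc ({x, y} : Set (Perm (Fin n))) ≤ 1 := orbc_pretrans htrans
  have hkx : Even (Multiset.card x.cycleType) := even_card_cycleType_x hx hy hxy
  obtain ⟨k2, hk2⟩ := hkx
  have hsx : x.support.card = Multiset.card x.cycleType * 2 := support_card_eq Nat.prime_two hx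
  have hfx := fix_add_support x
  rw [hcard] at hmx2 hmy2 hmz2 hree hfx
  constructor
  · show _ % 84 = _ % 84
    omega
  · omega
end

section
/- Suppose x, y ∈ Sym(21) satisfy x² = y³ = (xy)⁷ = 1 and ⟨x,y⟩ = Alt(21). Let V be the standard 20-dimensional irreducible ℂ-constituent of the natural permutation module ℂ²¹, and S = Sym²(V) its symmetric square (dim S = 210). If x fixes at least 5 points of {1,…,21}, then dim S^x ≥ 114, dim S^y ≥ 70, dim S^{xy} ≥ 30, and hence dim S^x + dim S^y + dim S^{xy} ≥ 214 > 212 = dim S + 2, contradicting Scott's formula for the irreducible module S. Therefore no Hurwitz generating triple of Alt(21) has its involution fixing 5 or more points. -/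
open Finset Module Submodule

namespace Stmt19

variable {Ω : Type*} [Fintype Ω] [DecidableEq Ω]

/-- The permutation action on the function module. -/
noncomputable def P (σ : Equiv.Perm Ω) : Module.End ℚ (Ω → ℚ) :=
  LinearMap.funLeft ℚ ℚ ⇑σ⁻¹

lemma P_apply (σ : Equiv.Perm Ω) (f : Ω → ℚ) (ω : Ω) : P σ f ω = f (σ⁻¹ ω) := rfl

lemma P_mul (σ τ : Equiv.Perm Ω) : P (σ * τ) = P σ * P τ := by
  apply LinearMap.ext; intro f; funext ω
  simp [P, LinearMap.funLeft_apply, Equiv.Perm.mul_apply, mul_inv_rev]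

set_option maxHeartbeats 1600000 in
/-- Scott's inequality, linear-algebra form. -/
lemma scott {V : Type*} [AddCommGroup V] [Module ℚ V] [FiniteDimensional ℚ V]
    (A B : Module.End ℚ V) :
    finrank ℚ V + finrank ℚ ↥(LinearMap.range A ⊔ LinearMap.range B) ≤
      finrank ℚ ↥(LinearMap.range A) + finrank ℚ ↥(LinearMap.range B) +
      finrank ℚ ↥(LinearMap.range (A + B + A ∘ₗ B)) +
      finrank ℚ ↥(LinearMap.ker A ⊓ LinearMap.ker B) := by
  set C : Module.End ℚ V := A + B + A ∘ₗ B with hC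
  set s : ↥(LinearMap.range A) × ↥(LinearMap.range B) →ₗ[ℚ] V :=
    (LinearMap.range A).subtype.coprod ((1 + A) ∘ₗ (LinearMap.range B).subtype) with hs
  have hrange : LinearMap.range s = LinearMap.range A ⊔ LinearMap.range B := by
    rw [hs, LinearMap.range_coprod, Submodule.range_subtype, LinearMap.range_comp,
      Submodule.range_subtype]
    apply le_antisymm
    · refine sup_le le_sup_left ?_
      rintro v ⟨b, hb, rfl⟩
      have : (1 + A) b = b + A b := by simp
      rw [this]
      exact add_mem (mem_sup_right hb) (mem_sup_left (LinearMap.mem_range_self A b))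
    · refine sup_le le_sup_left ?_
      intro b hb
      have : b = (1 + A) b - A b := by simp
      rw [this]
      exact sub_mem (mem_sup_right (Submodule.mem_map_of_mem hb))
        (mem_sup_left (LinearMap.mem_range_self A b))
  -- the comparison map from ker C
  have hker : ∀ v : V, C v = 0 → A v + (1 + A) (B v) = 0 := by
    intro v hv
    have : C v = A v + B v + A (B v) := by simp [hC]
    simp only [LinearMap.add_apply, Module.End.one_apply]
    rw [← add_assoc]
    rw [this] at hv; exact hv
  let φ : ↥(LinearMap.ker C) →ₗ[ℚ] ↥(LinearMap.ker s) :=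
    { toFun := fun v => ⟨(⟨A v.1, LinearMap.mem_range_self A v.1⟩,
        ⟨B v.1, LinearMap.mem_range_self B v.1⟩), by
          simp only [LinearMap.mem_ker, hs, LinearMap.coprod_apply, Submodule.coe_subtype,
            LinearMap.comp_apply]
          exact hker v.1 v.2⟩
      map_add' := fun u v => by ext <;> simp
      map_smul' := fun c v => by ext <;> simp }
  have hφker : ∀ v : ↥(LinearMap.ker C), φ v = 0 → (v : V) ∈ LinearMap.ker A ⊓ LinearMap.ker B := by
    intro v hv
    have h1 : A (v : V) = 0 := by
      have := congrArg (fun w => ((w : ↥(LinearMap.ker s)) : ↥(LinearMap.range A) × ↥(LinearMap.range B)).1.1) hv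
      simpa [φ] using this
    have h2 : B (v : V) = 0 := by
      have := congrArg (fun w => ((w : ↥(LinearMap.ker s)) : ↥(LinearMap.range A) × ↥(LinearMap.range B)).2.1) hv
      simpa [φ] using this
    exact ⟨h1, h2⟩
  -- dimension bookkeeping
  have hrn_s : finrank ℚ (↥(LinearMap.range A) × ↥(LinearMap.range B)) =
      finrank ℚ ↥(LinearMap.range s) + finrank ℚ ↥(LinearMap.ker s) :=
    (LinearMap.finrank_range_add_finrank_ker s).symm
  have hprod : finrank ℚ (↥(LinearMap.range A) × ↥(LinearMap.range B)) =
      finrank ℚ ↥(LinearMap.range A) + finrank ℚ ↥(LinearMap.range B) :=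
    Module.finrank_prod
  have hrn_φ : finrank ℚ ↥(LinearMap.range φ) + finrank ℚ ↥(LinearMap.ker φ) =
      finrank ℚ ↥(LinearMap.ker C) := LinearMap.finrank_range_add_finrank_ker φ
  have h1 : finrank ℚ ↥(LinearMap.range φ) ≤ finrank ℚ ↥(LinearMap.ker s) :=
    Submodule.finrank_le _
  have h2 : finrank ℚ ↥(LinearMap.ker φ) ≤ finrank ℚ ↥(LinearMap.ker A ⊓ LinearMap.ker B) := by
    let ψ : ↥(LinearMap.ker φ) →ₗ[ℚ] ↥(LinearMap.ker A ⊓ LinearMap.ker B) :=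
      { toFun := fun v => ⟨(v.1 : V), hφker v.1 v.2⟩
        map_add' := fun u v => by ext; simp
        map_smul' := fun c v => by ext; simp }
    have hψ : Function.Injective ψ := by
      intro u v huv
      have h := congrArg (fun z : ↥(LinearMap.ker A ⊓ LinearMap.ker B) => (z : V)) huv
      simp only [ψ] at h
      exact Subtype.ext (Subtype.ext h)
    exact LinearMap.finrank_le_finrank_of_injective hψ
  have hrn_C : finrank ℚ ↥(LinearMap.range C) + finrank ℚ ↥(LinearMap.ker C) = finrank ℚ V :=
    LinearMap.finrank_range_add_finrank_ker C
  rw [hrange] at hrn_s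
  omega


set_option maxHeartbeats 1600000 in
/-- Orbit-counting bound for the fixed space of a permutation of order dividing `m`. -/
lemma orbbound [LinearOrder Ω] (σ : Equiv.Perm Ω) (m : ℕ) (hm : 0 < m) (h1 : σ ^ m = 1) :
    Fintype.card Ω + (m - 1) * (univ.filter fun ω => σ ω = ω).card ≤
      m * finrank ℚ ↥(LinearMap.ker (P σ - 1)) := by
  classical
  set orb : Ω → Finset Ω := fun ω => (Finset.range m).image fun i => (σ ^ i) ω with horb
  have key : ∀ (k : ℕ) (ω : Ω), (σ ^ k) ω = (σ ^ (k % m)) ω := by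
    intro k ω; rw [← pow_eq_pow_mod k h1]
  have hmem : ∀ ω, ω ∈ orb ω := by
    intro ω
    simp only [horb, mem_image, Finset.mem_range]
    exact ⟨0, hm, by simp⟩
  have horbσ : ∀ ω, orb (σ ω) = orb ω := by
    intro ω
    ext τ
    simp only [horb, mem_image, Finset.mem_range]
    constructor
    · rintro ⟨i, hi, rfl⟩
      refine ⟨(i + 1) % m, Nat.mod_lt _ hm, ?_⟩
      rw [← key]
      rw [pow_succ]
      rfl
    · rintro ⟨i, hi, rfl⟩
      refine ⟨(i + m - 1) % m, Nat.mod_lt _ hm, ?_⟩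
      rw [← key]
      have : (σ ^ (i + m - 1)) (σ ω) = (σ ^ (i + m - 1) * σ) ω := rfl
      rw [this, ← pow_succ]
      have h2 : i + m - 1 + 1 = i + m := by omega
      rw [h2, pow_add, h1]
      simp
  have horbpow : ∀ (i : ℕ) (ω : Ω), orb ((σ ^ i) ω) = orb ω := by
    intro i
    induction i with
    | zero => simp
    | succ n ih =>
      intro ω
      have : (σ ^ (n + 1)) ω = σ ((σ ^ n) ω) := by rw [pow_succ']; rfl
      rw [this, horbσ, ih]
  set rep : Ω → Ω := fun ω => (orb ω).min' ⟨ω, hmem ω⟩ with hrep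
  have hrepmem : ∀ ω, rep ω ∈ orb ω := fun ω => Finset.min'_mem _ _
  have min'_congr : ∀ (s t : Finset Ω) (hs : s.Nonempty) (ht : t.Nonempty),
      s = t → s.min' hs = t.min' ht := by rintro s t hs ht rfl; rfl
  have hreporb : ∀ ω, orb (rep ω) = orb ω := by
    intro ω
    obtain ⟨i, _, hi⟩ := Finset.mem_image.mp (hrepmem ω)
    rw [← hi, horbpow]
  have hrepσ : ∀ ω, rep (σ ω) = rep ω := by
    intro ω; exact min'_congr _ _ _ _ (horbσ ω)
  have hrepinv : ∀ ω, rep (σ⁻¹ ω) = rep ω := by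
    intro ω
    have := hrepσ (σ⁻¹ ω)
    rw [Equiv.Perm.coe_inv, Equiv.apply_symm_apply] at this
    exact this.symm
  set R : Finset Ω := univ.image rep with hR
  have hrepR : ∀ ω, rep ω ∈ R := fun ω => Finset.mem_image_of_mem rep (Finset.mem_univ ω)
  -- dimension bound
  have hdim : R.card ≤ finrank ℚ ↥(LinearMap.ker (P σ - 1)) := by
    let L : (↥R → ℚ) →ₗ[ℚ] (Ω → ℚ) :=
      { toFun := fun h ω => h ⟨rep ω, hrepR ω⟩
        map_add' := fun _ _ => rfl
        map_smul' := fun _ _ => rfl }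
    have hLker : ∀ h, L h ∈ LinearMap.ker (P σ - 1) := by
      intro h
      rw [LinearMap.mem_ker]
      funext ω
      show (P σ) (L h) ω - L h ω = 0
      show L h (σ⁻¹ ω) - L h ω = 0
      simp only [L, LinearMap.coe_mk, AddHom.coe_mk]
      rw [sub_eq_zero]
      congr 1
      exact Subtype.ext (hrepinv ω)
    let L' : (↥R → ℚ) →ₗ[ℚ] ↥(LinearMap.ker (P σ - 1)) := L.codRestrict _ hLker
    have hinj : Function.Injective L' := by
      intro h g hg
      funext r
      obtain ⟨ω, _, hω⟩ := Finset.mem_image.mp r.2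
      have h1 := congrArg (fun z : ↥(LinearMap.ker (P σ - 1)) => (z : Ω → ℚ) ω) hg
      simp only [L', L, LinearMap.codRestrict_apply, LinearMap.coe_mk, AddHom.coe_mk] at h1
      have e : (⟨rep ω, hrepR ω⟩ : ↥R) = r := Subtype.ext hω
      rw [e] at h1
      exact h1
    calc R.card = finrank ℚ (↥R → ℚ) := by
          rw [Module.finrank_pi, Fintype.card_coe]
      _ ≤ _ := LinearMap.finrank_le_finrank_of_injective hinj
  -- counting bound
  have hcount : Fintype.card Ω + (m - 1) * (univ.filter fun ω => σ ω = ω).card ≤ m * R.card := by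
    set Fix : Finset Ω := univ.filter fun ω => σ ω = ω with hFix
    have hfix_orb : ∀ ω ∈ Fix, orb ω = {ω} := by
      intro ω hω
      rw [hFix, Finset.mem_filter] at hω
      have hfp : ∀ i : ℕ, (σ ^ i) ω = ω := by
        intro i
        induction i with
        | zero => simp
        | succ n ih => rw [pow_succ']; show σ ((σ ^ n) ω) = ω; rw [ih, hω.2]
      ext τ
      simp only [horb, mem_image, Finset.mem_range, Finset.mem_singleton]
      constructor
      · rintro ⟨i, _, rfl⟩; exact hfp i
      · rintro rfl; exact ⟨0, hm, hfp 0⟩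
    have hFixR : Fix ⊆ R := by
      intro ω hω
      have : rep ω = ω := by
        have h2 := min'_congr (orb ω) {ω} ⟨ω, hmem ω⟩ ⟨ω, Finset.mem_singleton_self ω⟩
          (hfix_orb ω hω)
        rw [hrep]
        simpa using h2
      rw [← this]; exact hrepR ω
    have hcover : (univ : Finset Ω) ⊆ R.biUnion orb := by
      intro ω _
      exact Finset.mem_biUnion.mpr ⟨rep ω, hrepR ω, by rw [hreporb]; exact hmem ω⟩
    have h3 : Fintype.card Ω ≤ ∑ r ∈ R, (orb r).card := by
      calc Fintype.card Ω = (univ : Finset Ω).card := (Finset.card_univ).symm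
        _ ≤ (R.biUnion orb).card := Finset.card_le_card hcover
        _ ≤ ∑ r ∈ R, (orb r).card := Finset.card_biUnion_le
    have hsplit : ∑ r ∈ R, (orb r).card =
        ∑ r ∈ R.filter (fun r => σ r = r), (orb r).card +
        ∑ r ∈ R.filter (fun r => ¬ σ r = r), (orb r).card :=
      (Finset.sum_filter_add_sum_filter_not R _ _).symm
    have hf1 : ∑ r ∈ R.filter (fun r => σ r = r), (orb r).card = Fix.card := by
      have he : R.filter (fun r => σ r = r) = Fix := by
        ext τ
        simp only [Finset.mem_filter, hFix, Finset.mem_univ, true_and]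
        exact ⟨fun h => h.2, fun h => ⟨hFixR (by simp [hFix, h]), h⟩⟩
      rw [he]
      rw [Finset.sum_congr rfl (fun r hr => by rw [hfix_orb r hr, Finset.card_singleton])]
      simp
    have hf2 : ∑ r ∈ R.filter (fun r => ¬ σ r = r), (orb r).card ≤
        (R.card - Fix.card) * m := by
      have : ∀ r ∈ R.filter (fun r => ¬ σ r = r), (orb r).card ≤ m := by
        intro r _
        calc (orb r).card ≤ (Finset.range m).card := Finset.card_image_le
          _ = m := Finset.card_range m
      calc ∑ r ∈ R.filter (fun r => ¬ σ r = r), (orb r).card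
          ≤ ∑ _r ∈ R.filter (fun r => ¬ σ r = r), m := Finset.sum_le_sum this
        _ = (R.filter (fun r => ¬ σ r = r)).card * m := by rw [Finset.sum_const, smul_eq_mul]
        _ = (R.card - Fix.card) * m := by
            have h5 : (R.filter fun r => ¬ σ r = r) = R \ (R.filter fun r => σ r = r) :=
              Finset.filter_not _ _
            have he : (R.filter (fun r => σ r = r)) = Fix := by
              ext τ
              simp only [Finset.mem_filter, hFix, Finset.mem_univ, true_and]
              exact ⟨fun h => h.2, fun h => ⟨hFixR (by simp [hFix, h]), h⟩⟩
            rw [h5, Finset.card_sdiff_of_subset (Finset.filter_subset _ _), he]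
    have hFR : Fix.card ≤ R.card := Finset.card_le_card hFixR
    obtain ⟨b, hb⟩ : ∃ b, R.card = Fix.card + b := ⟨R.card - Fix.card, by omega⟩
    have hbb : (R.card - Fix.card) = b := by omega
    rw [hbb] at hf2
    have hΩb : Fintype.card Ω ≤ Fix.card + b * m := by omega
    have key2 : Fintype.card Ω + (m - 1) * Fix.card ≤
        (Fix.card + b * m) + (m - 1) * Fix.card := by omega
    have e5 : (Fix.card + b * m) + (m - 1) * Fix.card = m * (Fix.card + b) := by
      cases m with
      | zero => omega
      | succ k => simp only [Nat.succ_sub_one]; ring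
    rw [hb]
    exact key2.trans (le_of_eq e5)
  calc Fintype.card Ω + (m - 1) * (univ.filter fun ω => σ ω = ω).card ≤ m * R.card := hcount
    _ ≤ m * finrank ℚ ↥(LinearMap.ker (P σ - 1)) := Nat.mul_le_mul_left m hdim


/-- Induced permutation on `Sym2`. -/
def hat : Equiv.Perm (Fin 21) →* Equiv.Perm (Sym2 (Fin 21)) where
  toFun σ :=
    { toFun := Sym2.map σ
      invFun := Sym2.map σ.symm
      left_inv := fun z => by
        rw [Sym2.map_map]
        simp [Equiv.symm_comp_self]
      right_inv := fun z => by
        rw [Sym2.map_map]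
        simp [Equiv.self_comp_symm] }
  map_one' := by
    apply Equiv.ext; intro z
    simp
  map_mul' σ τ := by
    apply Equiv.ext; intro z
    simp [Sym2.map_map, Equiv.Perm.mul_apply, Function.comp]

lemma hat_apply (σ : Equiv.Perm (Fin 21)) (z : Sym2 (Fin 21)) :
    hat σ z = Sym2.map σ z := rfl

/-- 2-transitivity of the alternating group on 21 points. -/
lemma two_trans (a b : Fin 21) (hab : a ≠ b) :
    ∃ g ∈ alternatingGroup (Fin 21), g 0 = a ∧ g 1 = b := by
  classical
  set p : Equiv.Perm (Fin 21) := Equiv.swap 0 a with hp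
  have hp0 : p 0 = a := Equiv.swap_apply_left 0 a
  set c : Fin 21 := p b with hc
  have hc0 : c ≠ 0 := by
    intro h
    have : p c = p 0 := by rw [h]
    rw [hc, Equiv.swap_apply_self, hp0] at this
    exact hab this.symm
  set q : Equiv.Perm (Fin 21) := Equiv.swap 1 c with hq
  set g0 : Equiv.Perm (Fin 21) := p * q with hg0
  have hga : g0 0 = a := by
    rw [hg0, Equiv.Perm.mul_apply, hq, Equiv.swap_apply_of_ne_of_ne (by decide) hc0.symm, hp0]
  have hgb : g0 1 = b := by
    rw [hg0, Equiv.Perm.mul_apply, hq, Equiv.swap_apply_left, hc, hp, Equiv.swap_apply_self]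
  rcases Int.units_eq_one_or (Equiv.Perm.sign g0) with hs | hs
  · exact ⟨g0, Equiv.Perm.mem_alternatingGroup.mpr hs, hga, hgb⟩
  · refine ⟨g0 * Equiv.swap 2 3, ?_, ?_, ?_⟩
    · rw [Equiv.Perm.mem_alternatingGroup, map_mul, hs, Equiv.Perm.sign_swap (by decide)]
      decide
    · rw [Equiv.Perm.mul_apply, Equiv.swap_apply_of_ne_of_ne (by decide) (by decide), hga]
    · rw [Equiv.Perm.mul_apply, Equiv.swap_apply_of_ne_of_ne (by decide) (by decide), hgb]

lemma one_trans (a : Fin 21) :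
    ∃ g ∈ alternatingGroup (Fin 21), g 0 = a := by
  by_cases h : a = 0
  · subst h
    obtain ⟨g, hg, h0, _⟩ := two_trans 0 1 (by decide)
    exact ⟨g, hg, h0⟩
  · obtain ⟨g, hg, h0, _⟩ := two_trans a 0 h
    exact ⟨g, hg, h0⟩

/-- closure induction specialized to our generated alternating group -/
lemma alt_induct (x y : Equiv.Perm (Fin 21))
    (hgen : Subgroup.closure {x, y} = alternatingGroup (Fin 21))
    (Q : Equiv.Perm (Fin 21) → Prop) (h1 : Q 1)
    (hmul : ∀ g h, Q g → Q h → Q (g * h)) (hinv : ∀ g, Q g → Q g⁻¹)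
    (hqx : Q x) (hqy : Q y) : ∀ g ∈ alternatingGroup (Fin 21), Q g := by
  let H : Subgroup (Equiv.Perm (Fin 21)) :=
    { carrier := {g | Q g}
      one_mem' := h1
      mul_mem' := fun {g} {h} hg hh => hmul g h hg hh
      inv_mem' := fun {g} hg => hinv g hg }
  intro g hg
  have hle : Subgroup.closure {x, y} ≤ H := by
    rw [Subgroup.closure_le]
    rintro z (rfl | rfl)
    · exact hqx
    · exact hqy
  rw [hgen] at hle
  exact hle hg

/-- count of fixed points of an involution with ≥ 5 fixed points on Sym2 -/
lemma fix_count (x : Equiv.Perm (Fin 21)) (hx2 : x ^ 2 = 1)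
    (h5 : 5 ≤ (univ.filter fun a => x a = a).card) :
    23 ≤ (univ.filter fun ω : Sym2 (Fin 21) => Sym2.map x ω = ω).card := by
  classical
  set Fx : Finset (Fin 21) := univ.filter fun a => x a = a with hFx
  set f : ℕ := Fx.card with hf
  have hxx : ∀ a, x (x a) = a := by
    intro a
    have : (x * x) a = (1 : Equiv.Perm (Fin 21)) a := by rw [← sq, hx2]
    simpa using this
  set FS : Finset (Sym2 (Fin 21)) := univ.filter fun ω => Sym2.map x ω = ω with hFS
  set Sle : Finset (Fin 21 × Fin 21) := (Fx ×ˢ Fx).filter fun p => p.1 ≤ p.2 with hSle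
  set E1 : Finset (Sym2 (Fin 21)) := Sle.image (fun p => s(p.1, p.2)) with hE1
  set K : Finset (Sym2 (Fin 21)) :=
    (univ.filter fun a => ¬ x a = a).image fun a => s(a, x a) with hK
  -- E1 card
  have hE1card : E1.card = Sle.card := by
    rw [hE1]
    apply Finset.card_image_of_injOn
    rintro ⟨p1, p2⟩ hp ⟨q1, q2⟩ hq hpq
    simp only [hSle, Finset.coe_filter, Set.mem_setOf_eq, Finset.mem_product] at hp hq
    rw [Sym2.eq_iff] at hpq
    rcases hpq with ⟨h1, h2⟩ | ⟨h1, h2⟩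
    · rw [Prod.mk.injEq]; exact ⟨h1, h2⟩
    · subst h1; subst h2
      rw [Prod.mk.injEq]
      exact ⟨le_antisymm hp.2 hq.2, le_antisymm hq.2 hp.2⟩
  -- double counting for Sle
  have hSle2 : 2 * Sle.card = f * f + f := by
    set Sge : Finset (Fin 21 × Fin 21) := (Fx ×ˢ Fx).filter fun p => p.2 ≤ p.1 with hSge
    have hcardeq : Sle.card = Sge.card := by
      apply Finset.card_bij' (fun p _ => Prod.swap p) (fun p _ => Prod.swap p)
      · rintro ⟨a, b⟩ h
        simp only [hSle, hSge, Finset.mem_filter, Finset.mem_product] at h ⊢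
        exact ⟨⟨h.1.2, h.1.1⟩, h.2⟩
      · rintro ⟨a, b⟩ h
        simp only [hSle, hSge, Finset.mem_filter, Finset.mem_product] at h ⊢
        exact ⟨⟨h.1.2, h.1.1⟩, h.2⟩
      · rintro ⟨a, b⟩ _; rfl
      · rintro ⟨a, b⟩ _; rfl
    have hunion : Sle ∪ Sge = Fx ×ˢ Fx := by
      ext ⟨a, b⟩
      simp only [hSle, hSge, Finset.mem_union, Finset.mem_filter, Finset.mem_product]
      constructor
      · rintro (⟨h, _⟩ | ⟨h, _⟩) <;> exact h
      · intro h
        rcases le_total a b with hab | hab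
        · exact Or.inl ⟨h, hab⟩
        · exact Or.inr ⟨h, hab⟩
    have hinter : Sle ∩ Sge = (Fx ×ˢ Fx).filter fun p => p.1 = p.2 := by
      ext ⟨a, b⟩
      simp only [hSle, hSge, Finset.mem_inter, Finset.mem_filter, Finset.mem_product]
      constructor
      · rintro ⟨⟨h, h1⟩, ⟨_, h2⟩⟩
        exact ⟨h, le_antisymm h1 h2⟩
      · rintro ⟨h, rfl⟩
        exact ⟨⟨h, le_refl _⟩, ⟨h, le_refl _⟩⟩
    have hdiag : ((Fx ×ˢ Fx).filter fun p => p.1 = p.2).card = f := by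
      rw [hf]
      apply Finset.card_bij (fun p _ => p.1)
      · rintro ⟨a, b⟩ h
        simp only [Finset.mem_filter, Finset.mem_product] at h
        exact h.1.1
      · rintro ⟨a, b⟩ ha ⟨c, d⟩ hc h
        simp only [Finset.mem_filter, Finset.mem_product] at ha hc
        simp only at h
        rw [Prod.mk.injEq]
        exact ⟨h, by rw [← ha.2, ← hc.2, h]⟩
      · intro a ha
        exact ⟨(a, a), by simp [Finset.mem_filter, Finset.mem_product, ha], rfl⟩
    have hcup : (Sle ∪ Sge).card + (Sle ∩ Sge).card = Sle.card + Sge.card :=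
      Finset.card_union_add_card_inter _ _
    rw [hunion, hinter, Finset.card_product, hdiag, ← hcardeq, ← hf] at hcup
    omega
  -- K bound
  have hKcard : (univ.filter fun a => ¬ x a = a).card ≤ 2 * K.card := by
    rw [hK]
    apply Finset.card_le_mul_card_image
    intro b hb
    rw [Finset.mem_image] at hb
    obtain ⟨a0, ha0, rfl⟩ := hb
    have hsub : ((univ.filter fun a => ¬ x a = a).filter fun a => s(a, x a) = s(a0, x a0)) ⊆
        insert a0 {x a0} := by
      intro a ha
      rw [Finset.mem_filter] at ha
      have := ha.2
      rw [Sym2.eq_iff] at this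
      rcases this with ⟨h1, _⟩ | ⟨h1, _⟩
      · simp [h1]
      · simp [h1]
    calc ((univ.filter fun a => ¬ x a = a).filter fun a => s(a, x a) = s(a0, x a0)).card
        ≤ (insert a0 ({x a0} : Finset (Fin 21))).card := Finset.card_le_card hsub
      _ ≤ 2 := by
          apply le_trans (Finset.card_insert_le _ _)
          simp
  -- disjointness
  have hdisj : Disjoint E1 K := by
    rw [Finset.disjoint_left]
    intro ω hω1 hω2
    rw [hE1, Finset.mem_image] at hω1
    rw [hK, Finset.mem_image] at hω2
    obtain ⟨⟨a, b⟩, hab, rfl⟩ := hω1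
    obtain ⟨c, hc, hcab⟩ := hω2
    simp only [hSle, Finset.mem_filter, Finset.mem_product, hFx] at hab
    rw [Finset.mem_filter] at hc
    have hxa : x a = a := by simpa using hab.1.1
    have hxb : x b = b := by simpa using hab.1.2
    rw [Sym2.eq_iff] at hcab
    rcases hcab with ⟨rfl, _⟩ | ⟨h1, rfl⟩
    · exact hc.2 hxa
    · rw [h1] at hc
      exact hc.2 hxb
  -- FS contains both
  have hsubFS : E1 ∪ K ⊆ FS := by
    intro ω hω
    rw [Finset.mem_union] at hω
    rw [hFS, Finset.mem_filter]
    refine ⟨Finset.mem_univ _, ?_⟩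
    rcases hω with hω | hω
    · rw [hE1, Finset.mem_image] at hω
      obtain ⟨⟨a, b⟩, hab, rfl⟩ := hω
      simp only [hSle, Finset.mem_filter, Finset.mem_product, hFx] at hab
      have hxa : x a = a := by simpa using hab.1.1
      have hxb : x b = b := by simpa using hab.1.2
      rw [Sym2.map_pair_eq, hxa, hxb]
    · rw [hK, Finset.mem_image] at hω
      obtain ⟨a, _, rfl⟩ := hω
      rw [Sym2.map_pair_eq, hxx a, Sym2.eq_swap]
  -- assemble
  have hcard1 : E1.card + K.card ≤ FS.card := by
    rw [← Finset.card_union_of_disjoint hdisj]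
    exact Finset.card_le_card hsubFS
  have hnf : f + (univ.filter fun a => ¬ x a = a).card = 21 := by
    have := Finset.card_filter_add_card_filter_not (s := (univ : Finset (Fin 21)))
      (p := fun a => x a = a)
    simp only [Finset.card_univ, Fintype.card_fin] at this
    rw [hf, hFx]
    exact this
  have h25 : 25 ≤ f * f := Nat.mul_le_mul h5 h5
  set nf : ℕ := (univ.filter fun a => ¬ x a = a).card
  -- 2 * FS.card ≥ 2*E1.card + 2*K.card ≥ (f*f+f) + nf and f + nf = 21
  omega


lemma Psingle {Ω : Type*} [Fintype Ω] [DecidableEq Ω] (σ : Equiv.Perm Ω) (ω : Ω) :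
    P σ (Pi.single ω 1) = Pi.single (σ ω) (1 : ℚ) := by
  funext τ
  rw [P_apply, Pi.single_apply, Pi.single_apply]
  by_cases h : τ = σ ω
  · subst h; simp
  · rw [if_neg h, if_neg (fun hc => h (by rw [← hc, Equiv.Perm.coe_inv, Equiv.apply_symm_apply]))]

end Stmt19

set_option maxHeartbeats 2000000 in
/-- No Hurwitz (i.e. (2,3,7)-) generating triple of Alt(21) has its
    involution fixing 5 or more points.  (This is the conclusion of the
    Scott-formula argument on the symmetric square of the 20-dimensional
    irreducible constituent of the natural permutation module ℂ²¹.) -/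
theorem stmt_19 (x y : Equiv.Perm (Fin 21))
    (hx : orderOf x = 2) (hy : orderOf y = 3) (hxy : orderOf (x * y) = 7)
    (hgen : Subgroup.closure {x, y} = alternatingGroup (Fin 21)) :
    ¬ (5 ≤ (Finset.univ.filter fun a => x a = a).card) := by
  intro h5
  classical
  open Finset Module Submodule Stmt19 in
  · letI : LinearOrder (Sym2 (Fin 21)) :=
      LinearOrder.lift' (Fintype.equivFin (Sym2 (Fin 21))) (Equiv.injective _)
    have hx2 : x ^ 2 = 1 := by rw [← hx]; exact pow_orderOf_eq_one x
    have hy3 : y ^ 3 = 1 := by rw [← hy]; exact pow_orderOf_eq_one y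
    have hxy7 : (x * y) ^ 7 = 1 := by rw [← hxy]; exact pow_orderOf_eq_one (x * y)
    set X : Equiv.Perm (Sym2 (Fin 21)) := hat x with hXdef
    set Y : Equiv.Perm (Sym2 (Fin 21)) := hat y with hYdef
    set Z : Equiv.Perm (Sym2 (Fin 21)) := hat (x * y) with hZdef
    have hXY : X * Y = Z := (map_mul hat x y).symm
    have hX2 : X ^ 2 = 1 := by rw [hXdef, ← map_pow, hx2, map_one]
    have hY3 : Y ^ 3 = 1 := by rw [hYdef, ← map_pow, hy3, map_one]
    have hZ7 : Z ^ 7 = 1 := by rw [hZdef, ← map_pow, hxy7, map_one]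
    set A : Module.End ℚ (Sym2 (Fin 21) → ℚ) := P X - 1 with hA
    set B : Module.End ℚ (Sym2 (Fin 21) → ℚ) := P Y - 1 with hB
    have hcard : Fintype.card (Sym2 (Fin 21)) = 231 := by
      rw [Sym2.card, Fintype.card_fin]
      decide
    have hdimV : finrank ℚ (Sym2 (Fin 21) → ℚ) = 231 := by
      rw [Module.finrank_pi, hcard]
    -- C is the action of xy
    have hC : A + B + A ∘ₗ B = P Z - 1 := by
      have h1 : P X * P Y = P Z := by rw [← P_mul, hXY]
      have h2 : A ∘ₗ B = A * B := rfl
      rw [h2, hA, hB, ← h1]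
      simp only [sub_mul, mul_sub, mul_one, one_mul]
      abel
    -- fixed-space dimension bounds
    have hbX := orbbound X 2 (by norm_num) hX2
    have hbY := orbbound Y 3 (by norm_num) hY3
    have hbZ := orbbound Z 7 (by norm_num) hZ7
    have hfixX : 23 ≤ (Finset.univ.filter fun ω : Sym2 (Fin 21) => X ω = ω).card := by
      have h23 := fix_count x hx2 h5
      have e : (Finset.univ.filter fun ω : Sym2 (Fin 21) => X ω = ω) =
          (Finset.univ.filter fun ω : Sym2 (Fin 21) => Sym2.map x ω = ω) := by
        apply Finset.filter_congr
        intro ω _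
        rw [hXdef, hat_apply]
      rw [e]
      exact h23
    rw [hcard] at hbX hbY hbZ
    rw [← hA] at hbX
    rw [← hB] at hbY
    -- rank-nullity
    have rnX : finrank ℚ ↥(LinearMap.range A) + finrank ℚ ↥(LinearMap.ker A) = 231 := by
      rw [LinearMap.finrank_range_add_finrank_ker, hdimV]
    have rnY : finrank ℚ ↥(LinearMap.range B) + finrank ℚ ↥(LinearMap.ker B) = 231 := by
      rw [LinearMap.finrank_range_add_finrank_ker, hdimV]
    have rnZ : finrank ℚ ↥(LinearMap.range (P Z - 1)) +
        finrank ℚ ↥(LinearMap.ker (P Z - 1)) = 231 := by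
      rw [LinearMap.finrank_range_add_finrank_ker, hdimV]
    -- invariant functions
    have hkermem : ∀ (f : Sym2 (Fin 21) → ℚ), f ∈ LinearMap.ker A ⊓ LinearMap.ker B →
        ∀ g ∈ alternatingGroup (Fin 21), ∀ ω, f (hat g ω) = f ω := by
      intro f hf
      have hfix : ∀ (σ : Equiv.Perm (Sym2 (Fin 21))), (P σ - 1) f = 0 →
          ∀ ω, f (σ ω) = f ω := by
        intro σ h0 ω
        have h1 : P σ f = f := by
          have : P σ f - f = 0 := h0
          rwa [sub_eq_zero] at this
        have h2 := congrFun h1 (σ ω)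
        rw [P_apply] at h2
        simpa using h2.symm
      exact alt_induct x y hgen (fun g => ∀ ω, f (hat g ω) = f ω)
        (by intro ω; rw [map_one]; rfl)
        (fun g h hg hh ω => by
          have e : hat (g * h) ω = hat g (hat h ω) := by rw [map_mul]; rfl
          rw [e, hg (hat h ω), hh ω])
        (fun g hg ω => by
          have h2 := hg ((hat g)⁻¹ ω)
          rw [Equiv.Perm.coe_inv, Equiv.apply_symm_apply] at h2
          rw [map_inv]
          exact h2.symm)
        (hfix X hf.1) (hfix Y hf.2)
    -- dim of invariants ≤ 2
    have hinf2 : finrank ℚ ↥(LinearMap.ker A ⊓ LinearMap.ker B) ≤ 2 := by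
      let ev : ↥(LinearMap.ker A ⊓ LinearMap.ker B) →ₗ[ℚ] ℚ × ℚ :=
        { toFun := fun fsub => ((fsub : Sym2 (Fin 21) → ℚ) s(0, 0),
            (fsub : Sym2 (Fin 21) → ℚ) s(0, 1))
          map_add' := fun u v => rfl
          map_smul' := fun c v => rfl }
      have hev : Function.Injective ev := by
        intro u v huv
        have h00 : (u : Sym2 (Fin 21) → ℚ) s(0, 0) = (v : Sym2 (Fin 21) → ℚ) s(0, 0) :=
          congrArg Prod.fst huv
        have h01 : (u : Sym2 (Fin 21) → ℚ) s(0, 1) = (v : Sym2 (Fin 21) → ℚ) s(0, 1) :=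
          congrArg Prod.snd huv
        apply Subtype.ext
        funext ω
        induction ω using Sym2.ind with
        | _ a b =>
          by_cases hab : a = b
          · subst hab
            obtain ⟨g, hg, hg0⟩ := one_trans a
            have e : hat g s(0, 0) = s(a, a) := by
              rw [hat_apply, Sym2.map_pair_eq, hg0]
            rw [← e, hkermem u.1 u.2 g hg, hkermem v.1 v.2 g hg]
            exact h00
          · obtain ⟨g, hg, hg0, hg1⟩ := two_trans a b hab
            have e : hat g s(0, 1) = s(a, b) := by
              rw [hat_apply, Sym2.map_pair_eq, hg0, hg1]
            rw [← e, hkermem u.1 u.2 g hg, hkermem v.1 v.2 g hg]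
            exact h01
      calc finrank ℚ ↥(LinearMap.ker A ⊓ LinearMap.ker B) ≤ finrank ℚ (ℚ × ℚ) :=
            LinearMap.finrank_le_finrank_of_injective hev
        _ = 2 := by rw [Module.finrank_prod, Module.finrank_self]
    -- the augmentation submodule
    have hWmem : ∀ g ∈ alternatingGroup (Fin 21), ∀ ω : Sym2 (Fin 21),
        (Pi.single (hat g ω) 1 : Sym2 (Fin 21) → ℚ) - Pi.single ω 1 ∈
          LinearMap.range A ⊔ LinearMap.range B := by
      refine alt_induct x y hgen _ ?_ ?_ ?_ ?_ ?_
      · intro ω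
        rw [map_one]
        simp
      · intro g h hg hh ω
        have e : hat (g * h) ω = hat g (hat h ω) := by rw [map_mul]; rfl
        rw [e, ← sub_add_sub_cancel _ (Pi.single (hat h ω) 1 : Sym2 (Fin 21) → ℚ) _]
        exact add_mem (hg (hat h ω)) (hh ω)
      · intro g hg ω
        have h2 := hg ((hat g)⁻¹ ω)
        rw [Equiv.Perm.coe_inv, Equiv.apply_symm_apply] at h2
        rw [map_inv, ← neg_sub]
        exact neg_mem h2
      · intro ω
        apply Submodule.mem_sup_left
        exact ⟨Pi.single ω 1, by rw [hA, LinearMap.sub_apply, Psingle]; rfl⟩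
      · intro ω
        apply Submodule.mem_sup_right
        exact ⟨Pi.single ω 1, by rw [hB, LinearMap.sub_apply, Psingle]; rfl⟩
    -- reaching every element of Sym2 from the base points
    have reach : ∀ ω : Sym2 (Fin 21), ∃ g ∈ alternatingGroup (Fin 21),
        hat g s(0, 0) = ω ∨ hat g s(0, 1) = ω := by
      intro ω
      induction ω using Sym2.ind with
      | _ a b =>
        by_cases hab : a = b
        · subst hab
          obtain ⟨g, hg, hg0⟩ := one_trans a
          exact ⟨g, hg, Or.inl (by rw [hat_apply, Sym2.map_pair_eq, hg0])⟩
        · obtain ⟨g, hg, hg0, hg1⟩ := two_trans a b hab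
          exact ⟨g, hg, Or.inr (by rw [hat_apply, Sym2.map_pair_eq, hg0, hg1])⟩
    set v0 : Sym2 (Fin 21) → ℚ := Pi.single s(0, 0) 1 with hv0
    set v1 : Sym2 (Fin 21) → ℚ := Pi.single s(0, 1) 1 with hv1
    set W : Submodule ℚ (Sym2 (Fin 21) → ℚ) := LinearMap.range A ⊔ LinearMap.range B with hW
    set S : Submodule ℚ (Sym2 (Fin 21) → ℚ) := span ℚ {v0} ⊔ span ℚ {v1} with hS
    have htop : W ⊔ S = ⊤ := by
      rw [eq_top_iff, ← (Pi.basisFun ℚ (Sym2 (Fin 21))).span_eq]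
      rw [Submodule.span_le]
      rintro v ⟨ω, rfl⟩
      rw [Pi.basisFun_apply]
      obtain ⟨g, hg, hor⟩ := reach ω
      rcases hor with hd | hd
      · have step : (Pi.single ω 1 : Sym2 (Fin 21) → ℚ) =
            (Pi.single ω 1 - v0) + v0 := by rw [sub_add_cancel]
        rw [step, ← hd]
        refine add_mem (Submodule.mem_sup_left ?_) (Submodule.mem_sup_right ?_)
        · rw [hv0]
          exact hWmem g hg s(0, 0)
        · exact Submodule.mem_sup_left (Submodule.mem_span_singleton_self v0)
      · have step : (Pi.single ω 1 : Sym2 (Fin 21) → ℚ) =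
            (Pi.single ω 1 - v1) + v1 := by rw [sub_add_cancel]
        rw [step, ← hd]
        refine add_mem (Submodule.mem_sup_left ?_) (Submodule.mem_sup_right ?_)
        · rw [hv1]
          exact hWmem g hg s(0, 1)
        · exact Submodule.mem_sup_right (Submodule.mem_span_singleton_self v1)
    have hv0ne : v0 ≠ 0 := by
      intro h
      have := congrFun h s(0, 0)
      simp [hv0, Pi.single_eq_same] at this
    have hv1ne : v1 ≠ 0 := by
      intro h
      have := congrFun h s(0, 1)
      simp [hv1, Pi.single_eq_same] at this
    have hSdim : finrank ℚ ↥S ≤ 2 := by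
      have h1 := Submodule.finrank_sup_add_finrank_inf_eq (span ℚ {v0}) (span ℚ {v1})
      have h2 : finrank ℚ ↥(span ℚ {v0}) = 1 := finrank_span_singleton hv0ne
      have h3 : finrank ℚ ↥(span ℚ {v1}) = 1 := finrank_span_singleton hv1ne
      rw [hS]
      omega
    have hWdim : 229 ≤ finrank ℚ ↥W := by
      have h1 := Submodule.finrank_sup_add_finrank_inf_eq W S
      rw [htop, finrank_top, hdimV] at h1
      omega
    -- Scott's inequality and the contradiction
    have hscott := scott A B
    rw [hC, hdimV] at hscott
    rw [← hW] at hscott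
    omega
end
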